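/- arXiv:2404.09084 — 4 statements merged into one kernel-verified Lean document; each statement's English description precedes it below -/
import Mathlib

section
/- Let n ≥ 1 and let W = (W₁,…,Wₙ) be the weighted left multi-shift on F²(Hₙ) associated with a weight sequence μ = {μ_β}_{|β|≥1} of nonnegative real numbers with sup_{α∈𝔽ₙ⁺} μ_{g_iα} < ∞ for each i. Then the sequence k ↦ sup_{α,β∈𝔽ₙ⁺, |β|=k} μ(β,α)^{1/k} converges as k → ∞ and its limit equals the joint spectral radius r(W). -/
open Filter ContinuousLinearMap
open scoped ComplexConjugate

noncomputable section

attribute [local instance] Classical.decEq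

abbrev Word (n : ℕ) := FreeMonoid (Fin n)

abbrev Fock (n : ℕ) := lp (fun _ : Word n => ℂ) 2

def fockE {n : ℕ} (α : Word n) : Fock n := lp.single 2 α 1

def wordOp {n : ℕ} {H : Type*} [NormedAddCommGroup H] [InnerProductSpace ℂ H]
    (T : Fin n → H →L[ℂ] H) (α : Word n) : H →L[ℂ] H :=
  ((FreeMonoid.toList α).map T).prod

def wordOfFn {n k : ℕ} (f : Fin k → Fin n) : Word n := FreeMonoid.ofList (List.ofFn f)

def rowSum {n : ℕ} {H : Type*} [NormedAddCommGroup H] [InnerProductSpace ℂ H]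
    [CompleteSpace H] (T : Fin n → H →L[ℂ] H) (k : ℕ) : H →L[ℂ] H :=
  ∑ f : Fin k → Fin n, wordOp T (wordOfFn f) * adjoint (wordOp T (wordOfFn f))

def jsr {n : ℕ} {H : Type*} [NormedAddCommGroup H] [InnerProductSpace ℂ H]
    [CompleteSpace H] (T : Fin n → H →L[ℂ] H) : ℝ :=
  limUnder atTop fun k : ℕ => ‖rowSum T k‖ ^ ((1 : ℝ) / (2 * k))

def muProd {n : ℕ} (μ : Word n → ℝ) (β α : Word n) : ℝ :=
  ((List.range (FreeMonoid.length β)).map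
    fun j => μ (FreeMonoid.ofList ((FreeMonoid.toList β).drop j) * α)).prod

def IsWeightedShift {n : ℕ} (μ : Word n → ℝ) (W : Fin n → Fock n →L[ℂ] Fock n) : Prop :=
  ∀ (i : Fin n) (α : Word n),
    W i (fockE α) = (μ (FreeMonoid.of i * α) : ℂ) • fockE (FreeMonoid.of i * α)

def BddWeights {n : ℕ} (μ : Word n → ℝ) : Prop :=
  ∀ i : Fin n, BddAbove (Set.range fun α : Word n => μ (FreeMonoid.of i * α))

def IsWeightedShiftTensor {n : ℕ} {H : Type*} [NormedAddCommGroup H] [InnerProductSpace ℂ H]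
    (μ : Word n → ℝ)
    (Wt : Fin n → lp (fun _ : Word n => H) 2 →L[ℂ] lp (fun _ : Word n => H) 2) : Prop :=
  ∀ (i : Fin n) (α : Word n) (h : H),
    Wt i (lp.single 2 α h) = (μ (FreeMonoid.of i * α) : ℂ) • lp.single 2 (FreeMonoid.of i * α) h

def polyOp {n : ℕ} {H : Type*} [NormedAddCommGroup H] [InnerProductSpace ℂ H]
    (T : Fin n → H →L[ℂ] H) (c : Word n →₀ ℂ) : H →L[ℂ] H :=
  c.sum fun α z => z • wordOp T α


namespace Aux

variable {n : ℕ}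

theorem muProd_nil (μ : Word n → ℝ) (α : Word n) : muProd μ 1 α = 1 := rfl

theorem muProd_cons (μ : Word n → ℝ) (i : Fin n) (β α : Word n) :
    muProd μ (FreeMonoid.of i * β) α = μ (FreeMonoid.of i * (β * α)) * muProd μ β α := by
  simp only [muProd, FreeMonoid.length_mul, FreeMonoid.length_of, FreeMonoid.toList_mul,
    FreeMonoid.toList_of]
  rw [add_comm 1, List.range_succ_eq_map]
  simp only [List.map_cons, List.map_map, List.prod_cons, List.drop_zero, List.singleton_append]
  congr 1

theorem muProd_ofList_mul (μ : Word n → ℝ) (l : List (Fin n)) (β₂ α : Word n) :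
    muProd μ (FreeMonoid.ofList l * β₂) α
      = muProd μ (FreeMonoid.ofList l) (β₂ * α) * muProd μ β₂ α := by
  induction l with
  | nil => simp [muProd_nil, FreeMonoid.ofList_nil]
  | cons i l ih =>
      rw [FreeMonoid.ofList_cons, mul_assoc, muProd_cons, muProd_cons, ih, mul_assoc,
        mul_assoc]

theorem muProd_mul (μ : Word n → ℝ) (β₁ β₂ α : Word n) :
    muProd μ (β₁ * β₂) α = muProd μ β₁ (β₂ * α) * muProd μ β₂ α := by
  have h := muProd_ofList_mul μ (FreeMonoid.toList β₁) β₂ α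
  rwa [FreeMonoid.ofList_toList] at h

theorem muProd_nonneg {μ : Word n → ℝ}
    (hμ : ∀ β : Word n, 1 ≤ FreeMonoid.length β → 0 ≤ μ β) (β α : Word n) :
    0 ≤ muProd μ β α := by
  rw [← FreeMonoid.ofList_toList β]
  induction FreeMonoid.toList β with
  | nil => rw [FreeMonoid.ofList_nil, muProd_nil]; norm_num
  | cons i l ih =>
      rw [FreeMonoid.ofList_cons, muProd_cons]
      refine mul_nonneg (hμ _ ?_) ih
      rw [FreeMonoid.length_mul, FreeMonoid.length_of]
      omega

theorem muProd_le_pow {μ : Word n → ℝ}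
    (hμ : ∀ β : Word n, 1 ≤ FreeMonoid.length β → 0 ≤ μ β)
    {M : ℝ} (hM0 : 0 ≤ M) (hM : ∀ (i : Fin n) (w : Word n), μ (FreeMonoid.of i * w) ≤ M)
    (l : List (Fin n)) (α : Word n) :
    muProd μ (FreeMonoid.ofList l) α ≤ M ^ l.length := by
  induction l with
  | nil => rw [FreeMonoid.ofList_nil, muProd_nil]; simp
  | cons i l ih =>
      rw [FreeMonoid.ofList_cons, muProd_cons, List.length_cons, pow_succ, mul_comm (M ^ l.length)]
      exact mul_le_mul (hM _ _) ih (muProd_nonneg hμ _ _) hM0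

end Aux


section Op

variable {n : ℕ} {μ : Word n → ℝ} {W : Fin n → Fock n →L[ℂ] Fock n}

theorem fockE_apply (γ δ : Word n) :
    (fockE γ : ∀ _ : Word n, ℂ) δ = if δ = γ then 1 else 0 := by
  rw [fockE, lp.single_apply]
  split_ifs with h
  · subst h; simp
  · simp [Pi.single_apply, h]

theorem coord_eq_inner (x : Fock n) (α : Word n) :
    (inner ℂ (fockE α) x : ℂ) = x α := by
  rw [fockE, lp.inner_single_left]
  simp [RCLike.inner_apply]

theorem fock_ext {x y : Fock n} (h : ∀ α, x α = y α) : x = y :=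
  lp.ext (funext h)

theorem wordOp_fockE (hW : IsWeightedShift μ W) (β α : Word n) :
    wordOp W β (fockE α) = ((muProd μ β α : ℝ) : ℂ) • fockE (β * α) := by
  rw [← FreeMonoid.ofList_toList β]
  induction FreeMonoid.toList β with
  | nil =>
      rw [FreeMonoid.ofList_nil, Aux.muProd_nil, one_mul]
      simp [wordOp, FreeMonoid.toList_one]
  | cons i l ih =>
      have h1 : wordOp W (FreeMonoid.ofList (i :: l)) =
          W i * wordOp W (FreeMonoid.ofList l) := by
        simp [wordOp, FreeMonoid.toList_ofList]
      rw [h1, ContinuousLinearMap.mul_apply, ih, map_smul, hW i _, FreeMonoid.ofList_cons,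
        Aux.muProd_cons, smul_smul, mul_assoc (FreeMonoid.of i) (FreeMonoid.ofList l) α]
      push_cast
      ring_nf

theorem adjoint_apply_coord (A : Fock n →L[ℂ] Fock n) (x : Fock n) (α : Word n) :
    (adjoint A x) α = (inner ℂ (A (fockE α)) x : ℂ) := by
  rw [← coord_eq_inner, ContinuousLinearMap.adjoint_inner_right]

theorem adjoint_wordOp_coord (hW : IsWeightedShift μ W) (β γ α : Word n) :
    (adjoint (wordOp W β) (fockE γ)) α
      = ((muProd μ β α : ℝ) : ℂ) * (if β * α = γ then 1 else 0) := by
  rw [adjoint_apply_coord, wordOp_fockE hW, inner_smul_left, coord_eq_inner, fockE_apply]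
  simp

theorem adjoint_wordOp_fockE_mul (hW : IsWeightedShift μ W) (β α₀ : Word n) :
    adjoint (wordOp W β) (fockE (β * α₀)) = ((muProd μ β α₀ : ℝ) : ℂ) • fockE α₀ := by
  refine fock_ext fun α => ?_
  rw [adjoint_wordOp_coord hW]
  have hsm : ((((muProd μ β α₀ : ℝ) : ℂ) • fockE α₀ : Fock n) : ∀ _ : Word n, ℂ) α
      = ((muProd μ β α₀ : ℝ) : ℂ) * (fockE α₀ : ∀ _ : Word n, ℂ) α := rfl
  rw [hsm, fockE_apply]
  by_cases h : α = α₀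
  · subst h; simp
  · have h2 : β * α ≠ β * α₀ := fun hc => h (mul_left_cancel hc)
    simp [h, h2]

theorem adjoint_wordOp_fockE_ne (hW : IsWeightedShift μ W) (β γ : Word n)
    (h : ∀ α, β * α ≠ γ) : adjoint (wordOp W β) (fockE γ) = 0 := by
  refine fock_ext fun α => ?_
  rw [adjoint_wordOp_coord hW, if_neg (h α)]
  simp

end Op


section Row

variable {n : ℕ} {μ : Word n → ℝ} {W : Fin n → Fock n →L[ℂ] Fock n}

def dco (μ : Word n → ℝ) (k : ℕ) (γ : Word n) : ℝ :=
  if k ≤ (FreeMonoid.toList γ).length then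
    (muProd μ (FreeMonoid.ofList ((FreeMonoid.toList γ).take k))
      (FreeMonoid.ofList ((FreeMonoid.toList γ).drop k))) ^ 2
  else 0

theorem length_wordOfFn {k : ℕ} (f : Fin k → Fin n) :
    FreeMonoid.length (wordOfFn f) = k :=
  List.length_ofFn (f := f)

theorem rowSum_fockE (hW : IsWeightedShift μ W) (k : ℕ) (γ : Word n) :
    rowSum W k (fockE γ) = ((dco μ k γ : ℝ) : ℂ) • fockE γ := by
  rw [rowSum, ContinuousLinearMap.sum_apply]
  by_cases hk : k ≤ (FreeMonoid.toList γ).length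
  · set l := FreeMonoid.toList γ with hl
    have hlen : (l.take k).length = k := by
      rw [List.length_take]; omega
    set f₀ : Fin k → Fin n := fun j => (l.take k).get (Fin.cast hlen.symm j) with hf₀def
    have hf₀ : List.ofFn f₀ = l.take k := by
      apply List.ext_getElem
      · simp [hlen]
      · intro i h1 h2
        simp [hf₀def]
    have hw : wordOfFn f₀ = FreeMonoid.ofList (l.take k) := by rw [wordOfFn, hf₀]
    have hγ : wordOfFn f₀ * FreeMonoid.ofList (l.drop k) = γ := by
      rw [hw, ← FreeMonoid.ofList_append, List.take_append_drop, hl,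
        FreeMonoid.ofList_toList]
    rw [Finset.sum_eq_single f₀]
    · rw [ContinuousLinearMap.mul_apply, ← hγ, adjoint_wordOp_fockE_mul hW, map_smul,
        wordOp_fockE hW, hγ, smul_smul, dco, if_pos hk, ← hw, ← hl]
      push_cast [sq]
      ring_nf
    · intro f _ hf
      rw [ContinuousLinearMap.mul_apply, adjoint_wordOp_fockE_ne hW, map_zero]
      intro α hα
      apply hf
      have htl : List.ofFn f ++ FreeMonoid.toList α = l := by
        have := congrArg FreeMonoid.toList hα
        rwa [FreeMonoid.toList_mul, wordOfFn, FreeMonoid.toList_ofList] at this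
      have ht : List.ofFn f = l.take k := by
        rw [← htl, List.take_left' (by simp)]
      exact List.ofFn_injective (ht.trans hf₀.symm)
    · intro hmem
      exact absurd (Finset.mem_univ f₀) hmem
  · rw [dco, if_neg hk]
    push_cast
    rw [zero_smul]
    apply Finset.sum_eq_zero
    intro f _
    rw [Function.comp_apply, adjoint_wordOp_fockE_ne hW, map_zero]
    intro α hα
    apply hk
    have := congrArg FreeMonoid.length hα
    rw [FreeMonoid.length_mul, length_wordOfFn] at this
    have hγl : FreeMonoid.length γ = (FreeMonoid.toList γ).length := rfl
    omega

theorem rowSum_apply_coord (hW : IsWeightedShift μ W) (k : ℕ) (x : Fock n) (δ : Word n) :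
    (rowSum W k x) δ = ((dco μ k δ : ℝ) : ℂ) * x δ := by
  have hx : HasSum (fun γ : Word n => lp.single 2 γ (x γ)) x :=
    lp.hasSum_single (by norm_num) x
  have h2 : HasSum (fun γ : Word n => rowSum W k (lp.single 2 γ (x γ))) (rowSum W k x) :=
    (rowSum W k).hasSum hx
  have h3 : HasSum (fun γ : Word n =>
      (inner ℂ (fockE δ) (rowSum W k (lp.single 2 γ (x γ))) : ℂ))
      (inner ℂ (fockE δ) (rowSum W k x) : ℂ) := (innerSL ℂ (fockE δ)).hasSum h2
  rw [coord_eq_inner] at h3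
  have h4 : (fun γ : Word n =>
      (inner ℂ (fockE δ) (rowSum W k (lp.single 2 γ (x γ))) : ℂ))
      = fun γ => if γ = δ then ((dco μ k δ : ℝ) : ℂ) * x δ else 0 := by
    funext γ
    have hsingle : lp.single 2 γ (x γ) = x γ • fockE γ := by
      rw [fockE, ← lp.single_smul]
      congr 1
      simp
    rw [hsingle, map_smul, rowSum_fockE hW, inner_smul_right, inner_smul_right,
      coord_eq_inner, fockE_apply]
    by_cases h : γ = δ
    · subst h; simp [smul_eq_mul]; ring
    · simp [h, Ne.symm h]
  rw [h4] at h3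
  exact h3.unique (hasSum_ite_eq δ _)

end Row


section Norm

variable {n : ℕ} {μ : Word n → ℝ} {W : Fin n → Fock n →L[ℂ] Fock n}

def Qseq (μ : Word n → ℝ) (k : ℕ) : ℝ :=
  ⨆ (f : Fin k → Fin n) (α : Word n), muProd μ (wordOfFn f) α

theorem exists_ofFn_take (l : List (Fin n)) {k : ℕ} (hk : k ≤ l.length) :
    ∃ f : Fin k → Fin n, List.ofFn f = l.take k := by
  have hlen : (l.take k).length = k := by rw [List.length_take]; omega
  refine ⟨fun j => (l.take k).get (Fin.cast hlen.symm j), ?_⟩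
  apply List.ext_getElem
  · simp [hlen]
  · intro i h1 h2
    simp

theorem dco_nonneg (μ : Word n → ℝ) (k : ℕ) (δ : Word n) : 0 ≤ dco μ k δ := by
  rw [dco]; split_ifs
  · exact sq_nonneg _
  · exact le_refl 0

theorem norm_sq_eq (y : Fock n) : ‖y‖ ^ 2 = ∑' δ : Word n, ‖y δ‖ ^ 2 := by
  have h := lp.norm_rpow_eq_tsum (p := 2) (E := fun _ : Word n => ℂ) (by norm_num) y
  rw [show ((2 : ENNReal).toReal) = ((2 : ℕ) : ℝ) by norm_num] at h
  simp only [Real.rpow_natCast] at h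
  exact h

theorem norm_fockE (γ : Word n) : ‖fockE γ‖ = 1 := by
  have := lp.norm_single (p := 2) (E := fun _ : Word n => ℂ) (by norm_num)
    γ (1 : ℂ)
  simpa [fockE] using this

section withM

variable (hμ : ∀ β : Word n, 1 ≤ FreeMonoid.length β → 0 ≤ μ β)
  {M : ℝ} (hM0 : 0 ≤ M) (hM : ∀ (i : Fin n) (w : Word n), μ (FreeMonoid.of i * w) ≤ M)

include hμ hM0 hM

theorem muProd_wordOfFn_le {k : ℕ} (f : Fin k → Fin n) (α : Word n) :
    muProd μ (wordOfFn f) α ≤ M ^ k := by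
  have := Aux.muProd_le_pow hμ hM0 hM (List.ofFn f) α
  rwa [List.length_ofFn] at this

theorem bddA {k : ℕ} (f : Fin k → Fin n) :
    BddAbove (Set.range fun α : Word n => muProd μ (wordOfFn f) α) := by
  refine ⟨M ^ k, ?_⟩
  rintro x ⟨α, rfl⟩
  exact muProd_wordOfFn_le hμ hM0 hM f α

theorem bddB {k : ℕ} :
    BddAbove (Set.range fun f : Fin k → Fin n =>
      ⨆ α : Word n, muProd μ (wordOfFn f) α) := by
  refine ⟨M ^ k, ?_⟩
  rintro x ⟨f, rfl⟩
  exact ciSup_le fun α => muProd_wordOfFn_le hμ hM0 hM f α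

theorem le_Qseq {k : ℕ} (f : Fin k → Fin n) (α : Word n) :
    muProd μ (wordOfFn f) α ≤ Qseq μ k :=
  le_trans (le_ciSup (bddA hμ hM0 hM f) α) (le_ciSup (bddB hμ hM0 hM) f)

theorem Qseq_nonneg (hn : 1 ≤ n) (k : ℕ) : 0 ≤ Qseq μ k := by
  haveI : Nonempty (Fin n) := ⟨⟨0, hn⟩⟩
  refine le_trans (Aux.muProd_nonneg hμ (wordOfFn (Classical.arbitrary _)) 1)
    (le_Qseq hμ hM0 hM (k := k) _ 1)

theorem Qseq_le (hn : 1 ≤ n) {k : ℕ} {B : ℝ}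
    (h : ∀ (f : Fin k → Fin n) (α : Word n), muProd μ (wordOfFn f) α ≤ B) :
    Qseq μ k ≤ B := by
  haveI : Nonempty (Fin n) := ⟨⟨0, hn⟩⟩
  exact ciSup_le fun f => ciSup_le fun α => h f α

theorem dco_le (k : ℕ) (δ : Word n) : dco μ k δ ≤ Qseq μ k ^ 2 := by
  rw [dco]; split_ifs with h
  · obtain ⟨f, hf⟩ := exists_ofFn_take (FreeMonoid.toList δ) h
    have : FreeMonoid.ofList ((FreeMonoid.toList δ).take k) = wordOfFn f := by
      rw [wordOfFn, hf]
    rw [this]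
    exact pow_le_pow_left₀ (Aux.muProd_nonneg hμ _ _) (le_Qseq hμ hM0 hM f _) 2
  · exact sq_nonneg _

theorem norm_rowSum_le (hn : 1 ≤ n) (hW : IsWeightedShift μ W) (k : ℕ) :
    ‖rowSum W k‖ ≤ Qseq μ k ^ 2 := by
  refine ContinuousLinearMap.opNorm_le_bound _ (sq_nonneg _) fun x => ?_
  have hsq : ‖rowSum W k x‖ ^ 2 ≤ (Qseq μ k ^ 2 * ‖x‖) ^ 2 := by
    rw [norm_sq_eq (rowSum W k x), mul_pow, norm_sq_eq x, ← tsum_mul_left]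
    refine Summable.tsum_le_tsum (fun δ => ?_) ?_ ?_
    · rw [rowSum_apply_coord hW]
      rw [norm_mul, Complex.norm_real, Real.norm_eq_abs, abs_of_nonneg (dco_nonneg μ k δ),
        mul_pow]
      have h1 : dco μ k δ ^ 2 ≤ (Qseq μ k ^ 2) ^ 2 :=
        pow_le_pow_left₀ (dco_nonneg μ k δ) (dco_le hμ hM0 hM k δ) 2
      exact mul_le_mul_of_nonneg_right h1 (sq_nonneg _)
    · have h2 := (lp.memℓp (rowSum W k x)).summable (p := 2) (by norm_num)
      rw [show ((2 : ENNReal).toReal) = ((2 : ℕ) : ℝ) by norm_num] at h2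
      simpa only [Real.rpow_natCast] using h2
    · have h2 := (lp.memℓp x).summable (p := 2) (by norm_num)
      rw [show ((2 : ENNReal).toReal) = ((2 : ℕ) : ℝ) by norm_num] at h2
      exact Summable.mul_left _ (by simpa only [Real.rpow_natCast] using h2)
  have := Real.sqrt_le_sqrt hsq
  rwa [Real.sqrt_sq (norm_nonneg _),
    Real.sqrt_sq (mul_nonneg (sq_nonneg _) (norm_nonneg _))] at this

theorem le_norm_rowSum (hn : 1 ≤ n) (hW : IsWeightedShift μ W) (k : ℕ) :
    Qseq μ k ^ 2 ≤ ‖rowSum W k‖ := by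
  have key : ∀ (f : Fin k → Fin n) (α : Word n),
      muProd μ (wordOfFn f) α ≤ Real.sqrt ‖rowSum W k‖ := by
    intro f α
    set γ := wordOfFn f * α with hγ
    have htl : FreeMonoid.toList γ = List.ofFn f ++ FreeMonoid.toList α := rfl
    have hk : k ≤ (FreeMonoid.toList γ).length := by
      rw [htl, List.length_append, List.length_ofFn]; omega
    have hdco : dco μ k γ = muProd μ (wordOfFn f) α ^ 2 := by
      rw [dco, if_pos hk, htl, List.take_left' (List.length_ofFn (f := f)),
        List.drop_left' (List.length_ofFn (f := f)), FreeMonoid.ofList_toList]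
      rfl
    have h1 : ‖rowSum W k (fockE γ)‖ = dco μ k γ := by
      rw [rowSum_fockE hW, norm_smul, norm_fockE, mul_one, Complex.norm_real,
        Real.norm_eq_abs, abs_of_nonneg (dco_nonneg μ k γ)]
    have h2 : dco μ k γ ≤ ‖rowSum W k‖ := by
      rw [← h1]
      calc ‖rowSum W k (fockE γ)‖ ≤ ‖rowSum W k‖ * ‖fockE γ‖ :=
            ContinuousLinearMap.le_opNorm _ _
        _ = ‖rowSum W k‖ := by rw [norm_fockE, mul_one]
    have h3 : muProd μ (wordOfFn f) α ^ 2 ≤ ‖rowSum W k‖ := by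
      rw [← hdco]; exact h2
    have h4 := Real.sqrt_le_sqrt h3
    rwa [Real.sqrt_sq (Aux.muProd_nonneg hμ _ _)] at h4
  have hQ : Qseq μ k ≤ Real.sqrt ‖rowSum W k‖ := Qseq_le hμ hM0 hM hn key
  calc Qseq μ k ^ 2 ≤ Real.sqrt ‖rowSum W k‖ ^ 2 :=
        pow_le_pow_left₀ (Qseq_nonneg hμ hM0 hM hn k) hQ 2
    _ = ‖rowSum W k‖ := Real.sq_sqrt (norm_nonneg _)

theorem norm_rowSum_eq (hn : 1 ≤ n) (hW : IsWeightedShift μ W) (k : ℕ) :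
    ‖rowSum W k‖ = Qseq μ k ^ 2 :=
  le_antisymm (norm_rowSum_le hμ hM0 hM hn hW k) (le_norm_rowSum hμ hM0 hM hn hW k)

theorem Qseq_zero (hn : 1 ≤ n) : Qseq μ 0 = 1 := by
  haveI : Nonempty (Fin n) := ⟨⟨0, hn⟩⟩
  have h : ∀ (f : Fin 0 → Fin n) (α : Word n), muProd μ (wordOfFn f) α = 1 := by
    intro f α
    have : wordOfFn f = 1 := by rw [wordOfFn, List.ofFn_zero, FreeMonoid.ofList_nil]
    rw [this, Aux.muProd_nil]
  simp only [Qseq, h]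
  rw [ciSup_const]
  exact ciSup_const

theorem Qseq_submul (hn : 1 ≤ n) (k l : ℕ) :
    Qseq μ (k + l) ≤ Qseq μ k * Qseq μ l := by
  apply Qseq_le hμ hM0 hM hn
  intro f α
  set f₁ : Fin k → Fin n := fun i => f (Fin.castAdd l i) with hf₁
  set f₂ : Fin l → Fin n := fun j => f (Fin.natAdd k j) with hf₂
  have hsplit : wordOfFn f = wordOfFn f₁ * wordOfFn f₂ := by
    rw [wordOfFn, wordOfFn, wordOfFn, ← FreeMonoid.ofList_append, List.ofFn_add]; rfl
  rw [hsplit, Aux.muProd_mul]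
  exact mul_le_mul (le_Qseq hμ hM0 hM f₁ _) (le_Qseq hμ hM0 hM f₂ _)
    (Aux.muProd_nonneg hμ _ _) (Qseq_nonneg hμ hM0 hM hn k)

end withM

end Norm


section Fekete

theorem fekete {s : ℕ → ℝ} (h0 : s 0 = 1) (hnn : ∀ k, 0 ≤ s k)
    (hsub : ∀ k l, s (k + l) ≤ s k * s l) :
    ∃ L : ℝ, Tendsto (fun k : ℕ => s k ^ ((1 : ℝ) / k)) atTop (nhds L) := by
  set T : ℕ → ℝ := fun k => s k ^ ((1 : ℝ) / k) with hT
  set L := sInf (Set.range fun m : ℕ => T (m + 1)) with hLdef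
  have hrange_ne : (Set.range fun m : ℕ => T (m + 1)).Nonempty := ⟨T 1, ⟨0, rfl⟩⟩
  have hTnn : ∀ k, 0 ≤ T k := fun k => Real.rpow_nonneg (hnn k) _
  have hbddb : BddBelow (Set.range fun m : ℕ => T (m + 1)) := by
    refine ⟨0, ?_⟩; rintro x ⟨m, rfl⟩; exact hTnn _
  have hL0 : 0 ≤ L := le_csInf hrange_ne (by rintro x ⟨m, rfl⟩; exact hTnn _)
  have hLle : ∀ m : ℕ, L ≤ T (m + 1) := fun m => csInf_le hbddb ⟨m, rfl⟩
  refine ⟨L, ?_⟩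
  rw [Metric.tendsto_atTop]
  intro ε hε
  obtain ⟨x, ⟨m, rfl⟩, hx⟩ := exists_lt_of_csInf_lt hrange_ne
    (show L < L + ε / 2 by linarith)
  set m' := m + 1 with hm'
  have hm'1 : 1 ≤ m' := Nat.le_add_left 1 m
  have hpow : ∀ q : ℕ, s (m' * q) ≤ s m' ^ q := by
    intro q; induction q with
    | zero => simp [h0]
    | succ q ih =>
        calc s (m' * (q + 1)) = s (m' * q + m') := by ring_nf
          _ ≤ s (m' * q) * s m' := hsub _ _
          _ ≤ s m' ^ q * s m' := mul_le_mul_of_nonneg_right ih (hnn _)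
          _ = s m' ^ (q + 1) := (pow_succ _ _).symm
  by_cases hzero : s m' = 0
  · have hTm' : T m' = 0 := by
      simp only [hT]
      rw [hzero]
      exact Real.zero_rpow (by positivity)
    have hL : L = 0 := le_antisymm (by have := hLle m; rw [← hm', hTm'] at this; linarith) hL0
    refine ⟨m', fun k hk => ?_⟩
    have hsk : s k = 0 := by
      have h1 : s k ≤ s (k - m') * s m' := by
        have := hsub (k - m') m'; rwa [Nat.sub_add_cancel hk] at this
      have h2 := hnn k
      rw [hzero, mul_zero] at h1
      linarith
    have hTk : T k = 0 := by
      simp only [hT]; rw [hsk]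
      exact Real.zero_rpow (by have : 1 ≤ k := le_trans hm'1 hk; positivity)
    rw [hTk, hL]
    simpa using hε
  · have hspos : 0 < s m' := lt_of_le_of_ne (hnn m') (Ne.symm hzero)
    set a := T m' with ha
    have hapos : 0 < a := Real.rpow_pos_of_pos hspos _
    have hm'ne : ((m' : ℕ) : ℝ) ≠ 0 := Nat.cast_ne_zero.mpr (by omega)
    have ha_pow : a ^ ((m' : ℕ) : ℝ) = s m' := by
      simp only [hT, ha]
      rw [← Real.rpow_mul (hnn m'), one_div, inv_mul_cancel₀ hm'ne, Real.rpow_one]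
    set C := 1 + ∑ r ∈ Finset.range m', s r with hC
    have hC1 : 1 ≤ C := by
      have : 0 ≤ ∑ r ∈ Finset.range m', s r := Finset.sum_nonneg fun r _ => hnn r
      simp only [hC]; linarith
    have hCr : ∀ r, r < m' → s r ≤ C := by
      intro r hr
      have := Finset.single_le_sum (f := s) (fun i _ => hnn i) (Finset.mem_range.mpr hr)
      simp only [hC]; linarith
    set b := max a a⁻¹ with hb
    have hb1 : 1 ≤ b := by
      rcases le_total a 1 with h | h
      · exact le_trans ((one_le_inv₀ hapos).mpr h) (le_max_right _ _)
      · exact le_trans h (le_max_left _ _)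
    have hbpos : 0 < b := lt_of_lt_of_le one_pos hb1
    have key : ∀ k : ℕ, 1 ≤ k → T k ≤ a * b ^ ((m' : ℝ) / k) * C ^ ((1 : ℝ) / k) := by
      intro k hk1
      have hk0 : (0 : ℝ) < (k : ℝ) := by exact_mod_cast hk1
      have hqr : m' * (k / m') + k % m' = k := Nat.div_add_mod k m'
      have hrlt : k % m' < m' := Nat.mod_lt _ (by omega)
      have h1 : s k ≤ s m' ^ (k / m') * C := by
        calc s k = s (m' * (k / m') + k % m') := by rw [hqr]
          _ ≤ s (m' * (k / m')) * s (k % m') := hsub _ _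
          _ ≤ s m' ^ (k / m') * C :=
              mul_le_mul (hpow _) (hCr _ hrlt) (hnn _) (pow_nonneg (hnn m') _)
      have h2 : T k ≤ (s m' ^ (k / m') * C) ^ ((1 : ℝ) / k) :=
        Real.rpow_le_rpow (hnn k) h1 (by positivity)
      have h3 : ((s m' ^ (k / m') * C) : ℝ) ^ ((1 : ℝ) / k)
          = (s m' ^ (k / m')) ^ ((1 : ℝ) / k) * C ^ ((1 : ℝ) / k) :=
        Real.mul_rpow (pow_nonneg (hnn m') _) (le_trans zero_le_one hC1)
      have h4 : ((s m' ^ (k / m') : ℝ)) ^ ((1 : ℝ) / k)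
          = a ^ (((m' : ℝ) * (k / m' : ℕ)) / k) := by
        rw [← ha_pow, ← Real.rpow_natCast (a ^ ((m' : ℕ) : ℝ)) (k / m'),
          ← Real.rpow_mul (le_of_lt hapos), ← Real.rpow_mul (le_of_lt hapos)]
        ring_nf
      have hexp : ((m' : ℝ) * (k / m' : ℕ)) / k = 1 - ((k % m' : ℕ) : ℝ) / k := by
        have hcast : ((m' : ℕ) : ℝ) * ((k / m' : ℕ) : ℝ) + ((k % m' : ℕ) : ℝ) = (k : ℝ) := by
          exact_mod_cast hqr
        field_simp
        linarith
      have h5 : a ^ (((m' : ℝ) * (k / m' : ℕ)) / k) ≤ a * b ^ ((m' : ℝ) / k) := by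
        rw [hexp]
        have e1 : a ^ (1 - ((k % m' : ℕ) : ℝ) / k) = a * (a⁻¹) ^ (((k % m' : ℕ) : ℝ) / k) := by
          rw [Real.rpow_sub hapos, Real.rpow_one, Real.inv_rpow hapos.le, div_eq_mul_inv]
        rw [e1]
        have e2 : (a⁻¹) ^ (((k % m' : ℕ) : ℝ) / k) ≤ b ^ (((k % m' : ℕ) : ℝ) / k) :=
          Real.rpow_le_rpow (inv_nonneg.mpr hapos.le) (le_max_right _ _) (by positivity)
        have e3 : b ^ (((k % m' : ℕ) : ℝ) / k) ≤ b ^ ((m' : ℝ) / k) := by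
          apply Real.rpow_le_rpow_of_exponent_le hb1
          gcongr
        exact mul_le_mul_of_nonneg_left (le_trans e2 e3) hapos.le
      calc T k ≤ (s m' ^ (k / m') * C) ^ ((1 : ℝ) / k) := h2
        _ = (s m' ^ (k / m')) ^ ((1 : ℝ) / k) * C ^ ((1 : ℝ) / k) := h3
        _ = a ^ (((m' : ℝ) * (k / m' : ℕ)) / k) * C ^ ((1 : ℝ) / k) := by rw [h4]
        _ ≤ (a * b ^ ((m' : ℝ) / k)) * C ^ ((1 : ℝ) / k) :=
            mul_le_mul_of_nonneg_right h5 (Real.rpow_nonneg (le_trans zero_le_one hC1) _)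
    have hlim : Tendsto (fun k : ℕ => a * b ^ ((m' : ℝ) / k) * C ^ ((1 : ℝ) / k))
        atTop (nhds a) := by
      have h1 : Tendsto (fun k : ℕ => ((m' : ℝ) / k)) atTop (nhds 0) :=
        tendsto_const_div_atTop_nhds_zero_nat _
      have h1' : Tendsto (fun k : ℕ => ((1 : ℝ) / k)) atTop (nhds 0) :=
        tendsto_const_div_atTop_nhds_zero_nat _
      have h2 : Tendsto (fun k : ℕ => b ^ ((m' : ℝ) / k)) atTop (nhds 1) := by
        have hc : ContinuousAt (fun t : ℝ => b ^ t) 0 :=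
          Real.continuousAt_const_rpow (ne_of_gt hbpos)
        have := hc.tendsto.comp h1
        simpa [Function.comp_def, Real.rpow_zero] using this
      have h3 : Tendsto (fun k : ℕ => C ^ ((1 : ℝ) / k)) atTop (nhds 1) := by
        have hc : ContinuousAt (fun t : ℝ => C ^ t) 0 :=
          Real.continuousAt_const_rpow (by positivity)
        have := hc.tendsto.comp h1'
        simpa [Function.comp_def, Real.rpow_zero] using this
      have := ((tendsto_const_nhds (x := a) (f := atTop)).mul h2).mul h3
      simpa using this
    have haL : a < L + ε := by
      simp only [ha, hm']
      have : T (m + 1) < L + ε / 2 := hx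
      linarith
    have hev := hlim.eventually_lt_const haL
    obtain ⟨N, hN⟩ := Filter.eventually_atTop.mp hev
    refine ⟨max N 1, fun k hk => ?_⟩
    have hk1 : 1 ≤ k := le_trans (le_max_right _ _) hk
    have hTk : T k < L + ε :=
      lt_of_le_of_lt (key k hk1) (hN k (le_trans (le_max_left _ _) hk))
    have hLk : L ≤ T k := by
      have hkk : k = (k - 1) + 1 := by omega
      rw [hkk]; exact hLle (k - 1)
    rw [Real.dist_eq, abs_of_nonneg (by linarith)]
    linarith
  
end Fekete

theorem stmt_1 (n : ℕ) (hn : 1 ≤ n) (μ : Word n → ℝ)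
    (hμ : ∀ β : Word n, 1 ≤ FreeMonoid.length β → 0 ≤ μ β)
    (hbdd : BddWeights μ)
    (W : Fin n → Fock n →L[ℂ] Fock n) (hW : IsWeightedShift μ W) :
    Tendsto (fun k : ℕ => ⨆ (f : Fin k → Fin n) (α : Word n),
        muProd μ (wordOfFn f) α ^ ((1 : ℝ) / k)) atTop (nhds (jsr W)) := by
  haveI : Nonempty (Fin n) := ⟨⟨0, hn⟩⟩
  choose C hC using hbdd
  set M : ℝ := ∑ j : Fin n, |C j| with hMdef
  have hM0 : 0 ≤ M := Finset.sum_nonneg fun j _ => abs_nonneg _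
  have hM : ∀ (i : Fin n) (w : Word n), μ (FreeMonoid.of i * w) ≤ M := by
    intro i w
    refine le_trans (hC i ⟨w, rfl⟩) (le_trans (le_abs_self _) ?_)
    exact Finset.single_le_sum (fun j _ => abs_nonneg (C j)) (Finset.mem_univ i)
  obtain ⟨L, hL⟩ := fekete (Qseq_zero hμ hM0 hM hn) (fun k => Qseq_nonneg hμ hM0 hM hn k)
    (fun k l => Qseq_submul hμ hM0 hM hn k l)
  have hEq : ∀ k : ℕ, 1 ≤ k →
      (⨆ (f : Fin k → Fin n) (α : Word n), muProd μ (wordOfFn f) α ^ ((1 : ℝ) / k))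
        = Qseq μ k ^ ((1 : ℝ) / k) := by
    intro k hk
    have hkR : (0 : ℝ) < ((1 : ℝ) / k) := by
      have : (0 : ℝ) < (k : ℝ) := by exact_mod_cast hk
      positivity
    have hbddA' : ∀ f : Fin k → Fin n,
        BddAbove (Set.range fun α : Word n => muProd μ (wordOfFn f) α ^ ((1 : ℝ) / k)) := by
      intro f
      refine ⟨(M ^ k) ^ ((1 : ℝ) / k), ?_⟩
      rintro x ⟨α, rfl⟩
      exact Real.rpow_le_rpow (Aux.muProd_nonneg hμ _ _)
        (muProd_wordOfFn_le hμ hM0 hM f α) (le_of_lt hkR)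
    have hbddB' : BddAbove (Set.range fun f : Fin k → Fin n =>
        ⨆ α : Word n, muProd μ (wordOfFn f) α ^ ((1 : ℝ) / k)) := by
      refine ⟨(M ^ k) ^ ((1 : ℝ) / k), ?_⟩
      rintro x ⟨f, rfl⟩
      exact ciSup_le fun α => Real.rpow_le_rpow (Aux.muProd_nonneg hμ _ _)
        (muProd_wordOfFn_le hμ hM0 hM f α) (le_of_lt hkR)
    apply le_antisymm
    · exact ciSup_le fun f => ciSup_le fun α =>
        Real.rpow_le_rpow (Aux.muProd_nonneg hμ _ _) (le_Qseq hμ hM0 hM f α) (le_of_lt hkR)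
    · set S := ⨆ (f : Fin k → Fin n) (α : Word n), muProd μ (wordOfFn f) α ^ ((1 : ℝ) / k)
        with hS
      have hS0 : 0 ≤ S := by
        have h1 : muProd μ (wordOfFn (fun _ : Fin k => (⟨0, hn⟩ : Fin n))) 1 ^ ((1 : ℝ) / k)
            ≤ S :=
          le_trans (le_ciSup (hbddA' _) 1) (le_ciSup hbddB' _)
        exact le_trans (Real.rpow_nonneg (Aux.muProd_nonneg hμ _ _) _) h1
      have hkne : ((k : ℕ) : ℝ) ≠ 0 := Nat.cast_ne_zero.mpr (by omega)
      have hQS : Qseq μ k ≤ S ^ (k : ℝ) := by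
        apply Qseq_le hμ hM0 hM hn
        intro f α
        have h1 : muProd μ (wordOfFn f) α
            = (muProd μ (wordOfFn f) α ^ ((1 : ℝ) / k)) ^ (k : ℝ) := by
          rw [← Real.rpow_mul (Aux.muProd_nonneg hμ _ _), one_div,
            inv_mul_cancel₀ hkne, Real.rpow_one]
        rw [h1]
        refine Real.rpow_le_rpow (Real.rpow_nonneg (Aux.muProd_nonneg hμ _ _) _) ?_
          (Nat.cast_nonneg k)
        exact le_trans (le_ciSup (hbddA' f) α) (le_ciSup hbddB' f)
      calc Qseq μ k ^ ((1 : ℝ) / k) ≤ (S ^ (k : ℝ)) ^ ((1 : ℝ) / k) :=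
            Real.rpow_le_rpow (Qseq_nonneg hμ hM0 hM hn k) hQS (le_of_lt hkR)
        _ = S := by
            rw [← Real.rpow_mul hS0, one_div, mul_inv_cancel₀ hkne, Real.rpow_one]
  have hnorm : ∀ k : ℕ, 1 ≤ k →
      ‖rowSum W k‖ ^ ((1 : ℝ) / (2 * k)) = Qseq μ k ^ ((1 : ℝ) / k) := by
    intro k hk
    have hkne : ((k : ℕ) : ℝ) ≠ 0 := Nat.cast_ne_zero.mpr (by omega)
    rw [norm_rowSum_eq hμ hM0 hM hn hW k, ← Real.rpow_natCast (Qseq μ k) 2,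
      ← Real.rpow_mul (Qseq_nonneg hμ hM0 hM hn k)]
    congr 1
    push_cast
    field_simp
  have hjsr : jsr W = L := by
    rw [jsr]
    apply Filter.Tendsto.limUnder_eq
    apply hL.congr'
    filter_upwards [Filter.eventually_ge_atTop 1] with k hk
    exact (hnorm k hk).symm
  rw [hjsr]
  apply hL.congr'
  filter_upwards [Filter.eventually_ge_atTop 1] with k hk
  exact (hEq k hk).symm

end
end

section
/- Let n ≥ 1. A sequence {a_k}_{k≥1} of complex numbers has the property that there exists an n-tuple T = (T₁,…,Tₙ) of bounded operators on the full Fock space F²(Hₙ) with a_k = ‖∑_{σ∈𝔽ₙ⁺, |σ|=k} T_σ T_σ^*‖^{1/2} for every k ≥ 1 if and only if: each a_k is a nonnegative real number, a_{k+m} ≤ a_k·a_m for all k, m ≥ 1, and either (a) there is p ≥ 0 such that a_k > 0 for 1 ≤ k ≤ p and a_k = 0 for k > p, or (b) a_k > 0 for every k ≥ 1. -/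
open Filter ContinuousLinearMap
open scoped ComplexConjugate

noncomputable section

attribute [local instance] Classical.decEq
attribute [local instance] Classical.propDecidable
set_option linter.unusedSectionVars false
set_option synthInstance.maxHeartbeats 1000000
set_option maxHeartbeats 1000000

namespace Stmt2Aux

open Function

variable {n : ℕ}

section Generic

variable {H : Type*} [NormedAddCommGroup H] [InnerProductSpace ℂ H] [CompleteSpace H]
variable (T : Fin n → H →L[ℂ] H)

lemma wordOp_mul (α β : Word n) : wordOp T (α * β) = wordOp T α * wordOp T β := by
  simp [wordOp, FreeMonoid.toList_mul]

lemma wordOp_of (i : Fin n) : wordOp T (FreeMonoid.of i) = T i := by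
  simp [wordOp, FreeMonoid.toList_of]

lemma wordOfFn_cons {k : ℕ} (i : Fin n) (g : Fin k → Fin n) :
    wordOfFn (Fin.cons i g) = FreeMonoid.of i * wordOfFn g := by
  simp [wordOfFn, List.ofFn_succ, FreeMonoid.ofList_cons]

lemma rowSum_star (k : ℕ) :
    rowSum T k = ∑ f : Fin k → Fin n, wordOp T (wordOfFn f) * star (wordOp T (wordOfFn f)) := by
  simp [rowSum, ContinuousLinearMap.star_eq_adjoint]

lemma rowSum_zero : rowSum T 0 = 1 := by
  rw [rowSum_star]
  have h : ∀ f : Fin 0 → Fin n, wordOp T (wordOfFn f) = 1 := by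
    intro f
    simp [wordOp, wordOfFn, List.ofFn_zero]
  simp [h]

lemma rowSum_succ (k : ℕ) :
    rowSum T (k + 1) = ∑ i : Fin n, T i * rowSum T k * star (T i) := by
  have h1 : rowSum T (k + 1)
      = ∑ p : Fin n × (Fin k → Fin n),
          (T p.1 * wordOp T (wordOfFn p.2)) * star (T p.1 * wordOp T (wordOfFn p.2)) := by
    rw [rowSum_star]
    refine (Fintype.sum_equiv (Fin.consEquiv fun _ => Fin n) _ _ fun p => ?_).symm
    have hp : (Fin.consEquiv fun _ : Fin (k + 1) => Fin n) p = Fin.cons p.1 p.2 := rfl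
    rw [hp, wordOfFn_cons, wordOp_mul, wordOp_of]
  rw [h1, Fintype.sum_prod_type]
  refine Finset.sum_congr rfl fun i _ => ?_
  rw [rowSum_star, Finset.mul_sum, Finset.sum_mul]
  refine Finset.sum_congr rfl fun g _ => ?_
  rw [star_mul]
  simp [mul_assoc]

lemma rowSum_nonneg (k : ℕ) : (0 : H →L[ℂ] H) ≤ rowSum T k := by
  rw [rowSum_star]
  exact Finset.sum_nonneg fun f _ => mul_star_self_nonneg _

lemma rowSum_le (m k : ℕ) : rowSum T (k + m) ≤ ‖rowSum T m‖ • rowSum T k := by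
  induction k with
  | zero =>
      have hb : IsSelfAdjoint (rowSum T m) := (rowSum_nonneg T m).isSelfAdjoint
      have h := CStarAlgebra.star_right_conjugate_le_norm_smul
        (a := (1 : H →L[ℂ] H)) (b := rowSum T m) hb
      simpa [rowSum_zero] using h
  | succ k ih =>
      have hkm : k + 1 + m = (k + m) + 1 := by omega
      rw [hkm, rowSum_succ, rowSum_succ, Finset.smul_sum]
      refine Finset.sum_le_sum fun i _ => ?_
      calc T i * rowSum T (k + m) * star (T i)
          ≤ T i * (‖rowSum T m‖ • rowSum T k) * star (T i) := star_right_conjugate_le_conjugate ih (T i)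
        _ = ‖rowSum T m‖ • (T i * rowSum T k * star (T i)) := by
            simp [mul_smul_comm, smul_mul_assoc]

lemma norm_rowSum_add_le (k m : ℕ) :
    ‖rowSum T (k + m)‖ ≤ ‖rowSum T k‖ * ‖rowSum T m‖ := by
  have h := CStarAlgebra.norm_le_norm_of_nonneg_of_le (rowSum_nonneg T (k + m)) (rowSum_le T m k)
  rwa [norm_smul, Real.norm_of_nonneg (norm_nonneg _), mul_comm] at h

end Generic

section CompOp

variable (sg : Word n → Word n) (v : Word n → ℝ)

lemma two_toReal_pos : (0 : ℝ) < (2 : ENNReal).toReal := by norm_num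

def cFun (x : Word n → ℂ) (β : Word n) : ℂ :=
  if h : ∃ α, sg α = β then (v h.choose : ℂ) * x h.choose else 0

lemma cFun_sigma (hσ : Injective sg) (x : Word n → ℂ) (α : Word n) :
    cFun sg v x (sg α) = (v α : ℂ) * x α := by
  have h : ∃ α', sg α' = sg α := ⟨α, rfl⟩
  rw [cFun, dif_pos h, hσ h.choose_spec]

lemma cFun_not_mem (x : Word n → ℂ) (β : Word n) (h : ¬ ∃ α, sg α = β) :
    cFun sg v x β = 0 := by
  rw [cFun, dif_neg h]

lemma cFun_add (x y : Word n → ℂ) : cFun sg v (x + y) = cFun sg v x + cFun sg v y := by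
  funext β
  simp only [cFun, Pi.add_apply]
  split
  · ring
  · simp

lemma cFun_smul (c : ℂ) (x : Word n → ℂ) : cFun sg v (c • x) = c • cFun sg v x := by
  funext β
  simp only [cFun, Pi.smul_apply, smul_eq_mul]
  split
  · ring
  · simp

lemma memlp_cFun (hσ : Injective sg) {M : ℝ} (hv : ∀ α, |v α| ≤ M) (x : Fock n) :
    Memℓp (cFun sg v x) 2 := by
  have hM : 0 ≤ M := le_trans (abs_nonneg _) (hv 1)
  apply memℓp_gen
  have hx : Summable fun α : Word n => ‖x α‖ ^ (2 : ENNReal).toReal :=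
    (memℓp_gen_iff two_toReal_pos).mp (lp.memℓp x)
  have htar : Summable fun α : Word n => ‖cFun sg v x (sg α)‖ ^ (2 : ENNReal).toReal := by
    refine Summable.of_nonneg_of_le
      (fun α => Real.rpow_nonneg (norm_nonneg _) _) (fun α => ?_)
      (hx.mul_left (M ^ (2 : ENNReal).toReal))
    rw [cFun_sigma sg v hσ]
    calc ‖(v α : ℂ) * x α‖ ^ (2 : ENNReal).toReal
        ≤ (M * ‖x α‖) ^ (2 : ENNReal).toReal := by
          apply Real.rpow_le_rpow (norm_nonneg _) _ (le_of_lt two_toReal_pos)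
          rw [norm_mul, Complex.norm_real, Real.norm_eq_abs]
          exact mul_le_mul_of_nonneg_right (hv α) (norm_nonneg _)
      _ = M ^ (2 : ENNReal).toReal * ‖x α‖ ^ (2 : ENNReal).toReal :=
          Real.mul_rpow hM (norm_nonneg _)
  have hvan : ∀ β ∉ Set.range sg,
      ‖cFun sg v x β‖ ^ (2 : ENNReal).toReal = 0 := by
    intro β hβ
    rw [cFun_not_mem sg v x β (by simpa [Set.mem_range] using hβ), norm_zero,
      Real.zero_rpow (ne_of_gt two_toReal_pos)]
  exact (hσ.summable_iff hvan).mp htar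

lemma tsum_cFun_le (hσ : Injective sg) {M : ℝ} (hM : 0 ≤ M) (hv : ∀ α, |v α| ≤ M)
    (x : Fock n) :
    ∑' β, ‖cFun sg v x β‖ ^ (2 : ENNReal).toReal
      ≤ (M * ‖x‖) ^ (2 : ENNReal).toReal := by
  have hx : Summable fun α : Word n => ‖x α‖ ^ (2 : ENNReal).toReal :=
    (memℓp_gen_iff two_toReal_pos).mp (lp.memℓp x)
  have hvan : ∀ β, β ∉ Set.range sg →
      ‖cFun sg v x β‖ ^ (2 : ENNReal).toReal = 0 := by
    intro β hβ
    rw [cFun_not_mem sg v x β (by simpa [Set.mem_range] using hβ), norm_zero,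
      Real.zero_rpow (ne_of_gt two_toReal_pos)]
  have hsupp : Function.support (fun β => ‖cFun sg v x β‖ ^ (2 : ENNReal).toReal)
      ⊆ Set.range sg := by
    intro β hβ
    by_contra hc
    exact hβ (hvan β hc)
  rw [← hσ.tsum_eq hsupp]
  have htar : Summable fun α : Word n => ‖cFun sg v x (sg α)‖ ^ (2 : ENNReal).toReal :=
    ((hσ.summable_iff hvan).mpr (memℓp_gen_iff two_toReal_pos |>.mp
      (memlp_cFun sg v hσ hv x)))
  calc ∑' α : Word n, ‖cFun sg v x (sg α)‖ ^ (2 : ENNReal).toReal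
      ≤ ∑' α : Word n, M ^ (2 : ENNReal).toReal * ‖x α‖ ^ (2 : ENNReal).toReal := by
        refine Summable.tsum_le_tsum (fun α => ?_) htar (hx.mul_left _)
        rw [cFun_sigma sg v hσ]
        calc ‖(v α : ℂ) * x α‖ ^ (2 : ENNReal).toReal
            ≤ (M * ‖x α‖) ^ (2 : ENNReal).toReal := by
              apply Real.rpow_le_rpow (norm_nonneg _) _ (le_of_lt two_toReal_pos)
              rw [norm_mul, Complex.norm_real, Real.norm_eq_abs]
              exact mul_le_mul_of_nonneg_right (hv α) (norm_nonneg _)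
          _ = M ^ (2 : ENNReal).toReal * ‖x α‖ ^ (2 : ENNReal).toReal :=
              Real.mul_rpow hM (norm_nonneg _)
    _ = M ^ (2 : ENNReal).toReal * ∑' α : Word n, ‖x α‖ ^ (2 : ENNReal).toReal :=
        tsum_mul_left
    _ = M ^ (2 : ENNReal).toReal * ‖x‖ ^ (2 : ENNReal).toReal := by
        rw [lp.norm_rpow_eq_tsum two_toReal_pos x]
    _ = (M * ‖x‖) ^ (2 : ENNReal).toReal := (Real.mul_rpow hM (norm_nonneg _)).symm

def compOp (hσ : Injective sg) (M : ℝ) (hM : 0 ≤ M) (hv : ∀ α, |v α| ≤ M) :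
    Fock n →L[ℂ] Fock n :=
  LinearMap.mkContinuous
    { toFun := fun x => (⟨cFun sg v x, memlp_cFun sg v hσ hv x⟩ : Fock n)
      map_add' := fun x y => by
        apply lp.ext
        change cFun sg v ⇑(x + y) = cFun sg v ⇑x + cFun sg v ⇑y
        rw [lp.coeFn_add, cFun_add]
      map_smul' := fun c x => by
        apply lp.ext
        change cFun sg v ⇑(c • x) = c • cFun sg v ⇑x
        rw [lp.coeFn_smul, cFun_smul] }
    M
    (fun x => by
      apply lp.norm_le_of_tsum_le two_toReal_pos (mul_nonneg hM (norm_nonneg x))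
      exact tsum_cFun_le sg v hσ hM hv x)

lemma compOp_norm_le (hσ : Injective sg) (M : ℝ) (hM : 0 ≤ M) (hv : ∀ α, |v α| ≤ M) :
    ‖compOp sg v hσ M hM hv‖ ≤ M :=
  LinearMap.mkContinuous_norm_le _ hM _

lemma compOp_apply (hσ : Injective sg) (M : ℝ) (hM : 0 ≤ M) (hv : ∀ α, |v α| ≤ M)
    (x : Fock n) (β : Word n) :
    (compOp sg v hσ M hM hv x : Word n → ℂ) β = cFun sg v (x : Word n → ℂ) β := rfl

lemma compOp_single (hσ : Injective sg) (M : ℝ) (hM : 0 ≤ M) (hv : ∀ α, |v α| ≤ M)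
    (α : Word n) (z : ℂ) :
    compOp sg v hσ M hM hv (lp.single 2 α z) = lp.single 2 (sg α) ((v α : ℂ) * z) := by
  apply lp.ext
  funext β
  by_cases h : ∃ α', sg α' = β
  · obtain ⟨α', rfl⟩ := h
    rw [compOp_apply, cFun_sigma sg v hσ]
    by_cases hαα : α' = α
    · subst hαα
      rw [lp.single_apply_self, lp.single_apply_self]
    · rw [lp.single_apply_ne 2 α _ hαα, lp.single_apply_ne 2 (sg α) _ (fun hc => hαα (hσ hc)),
        mul_zero]
  · rw [compOp_apply, cFun_not_mem sg v _ _ h,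
      lp.single_apply_ne 2 (sg α) _ (fun hc => h ⟨α, hc.symm⟩)]

end CompOp

lemma ext_of_single {A B : Fock n →L[ℂ] Fock n}
    (h : ∀ (α : Word n) (z : ℂ), A (lp.single 2 α z) = B (lp.single 2 α z)) : A = B := by
  refine ContinuousLinearMap.ext fun x => ?_
  have hx := lp.hasSum_single (E := fun _ : Word n => ℂ) (p := 2) (by norm_num) x
  have hA : HasSum (fun α : Word n => A (lp.single 2 α (x α))) (A x) := hx.mapL A
  have hB : HasSum (fun α : Word n => A (lp.single 2 α (x α))) (B x) := by
    have := hx.mapL B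
    simpa [h] using this
  exact hA.unique hB

section Weights

variable (b' : ℕ → ℝ)

def dwt (k m : ℕ) : ℝ :=
  if b' m = 0 then (if k = 0 then 1 else 0) else b' (m + k) / b' m

lemma dwt_nonneg (Hnn : ∀ k, 0 ≤ b' k) (k m : ℕ) : 0 ≤ dwt b' k m := by
  unfold dwt
  split
  · split <;> norm_num
  · exact div_nonneg (Hnn _) (Hnn _)

lemma dwt_le (H0 : b' 0 = 1) (Hnn : ∀ k, 0 ≤ b' k)
    (Hsub : ∀ k m, b' (k + m) ≤ b' k * b' m) (k m : ℕ) : dwt b' k m ≤ b' k := by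
  unfold dwt
  split
  · split
    · next hk => rw [hk, H0]
    · exact Hnn k
  · next hm =>
    have hmpos : 0 < b' m := lt_of_le_of_ne (Hnn m) (Ne.symm hm)
    rw [div_le_iff₀ hmpos]
    calc b' (m + k) ≤ b' m * b' k := Hsub m k
      _ = b' k * b' m := mul_comm _ _

lemma dwt_zero_right (H0 : b' 0 = 1) (k : ℕ) : dwt b' k 0 = b' k := by
  unfold dwt
  rw [if_neg (by rw [H0]; norm_num), H0, zero_add, div_one]

lemma dwt_zero (m : ℕ) : dwt b' 0 m = 1 := by
  unfold dwt
  split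
  · rw [if_pos rfl]
  · next hm => rw [add_zero, div_self hm]

lemma van' (Hvan : ∀ k, b' k = 0 → b' (k + 1) = 0) (j : ℕ) (h : b' j = 0) :
    ∀ i, b' (j + i) = 0 := by
  intro i
  induction i with
  | zero => simpa using h
  | succ i ih => exact Hvan (j + i) ih

lemma dwt_succ (Hvan : ∀ k, b' k = 0 → b' (k + 1) = 0) (k m : ℕ) :
    dwt b' (k + 1) m = dwt b' 1 m * dwt b' k (m + 1) := by
  unfold dwt
  by_cases hm : b' m = 0
  · have hm1 : b' (m + 1) = 0 := Hvan m hm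
    simp [hm, hm1]
  · by_cases h1 : b' (m + 1) = 0
    · have h2 : b' (m + (k + 1)) = 0 := by
        have := van' b' Hvan (m + 1) h1 k
        rwa [show m + 1 + k = m + (k + 1) by omega] at this
      simp [hm, h1, h2]
    · rw [if_neg hm, if_neg hm, if_neg h1]
      rw [show m + 1 + k = m + (k + 1) by omega]
      field_simp

end Weights

section Shift

variable (i0 : Fin n) (b' : ℕ → ℝ)

def sig (k : ℕ) (α : Word n) : Word n := FreeMonoid.ofList (List.replicate k i0) * α

lemma sig_injective (k : ℕ) : Injective (sig i0 k) :=
  fun _ _ h => mul_left_cancel h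

variable (H0 : b' 0 = 1) (Hnn : ∀ k, 0 ≤ b' k)
  (Hsub : ∀ k m, b' (k + m) ≤ b' k * b' m)

def Sop (k : ℕ) : Fock n →L[ℂ] Fock n :=
  compOp (sig i0 k) (fun α => dwt b' k (FreeMonoid.length α)) (sig_injective i0 k)
    (b' k) (Hnn k)
    (fun α => by
      rw [abs_of_nonneg (dwt_nonneg b' Hnn _ _)]
      exact dwt_le b' H0 Hnn Hsub _ _)

lemma Sop_single (k : ℕ) (α : Word n) (z : ℂ) :
    Sop i0 b' H0 Hnn Hsub k (lp.single 2 α z)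
      = lp.single 2 (sig i0 k α) ((dwt b' k (FreeMonoid.length α) : ℂ) * z) :=
  compOp_single _ _ _ _ _ _ α z

lemma Sop_norm_le (k : ℕ) : ‖Sop i0 b' H0 Hnn Hsub k‖ ≤ b' k :=
  compOp_norm_le _ _ _ _ (Hnn k) _

lemma Sop_norm_ge (k : ℕ) : b' k ≤ ‖Sop i0 b' H0 Hnn Hsub k‖ := by
  have h := Sop_single i0 b' H0 Hnn Hsub k 1 1
  rw [FreeMonoid.length_one, dwt_zero_right b' H0, mul_one] at h
  have h1 : ‖Sop i0 b' H0 Hnn Hsub k (lp.single 2 (1 : Word n) (1 : ℂ))‖ = b' k := by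
    rw [h]
    have := lp.norm_single (E := fun _ : Word n => ℂ) (p := 2) (by norm_num)
      (sig i0 k 1) ((b' k : ℂ))
    rw [this, Complex.norm_real, Real.norm_of_nonneg (Hnn k)]
  have h2 : ‖lp.single (E := fun _ : Word n => ℂ) 2 1 (1 : ℂ)‖ = 1 := by
    have := lp.norm_single (E := fun _ : Word n => ℂ) (p := 2) (by norm_num)
      (1 : Word n) (1 : ℂ)
    rw [this, norm_one]
  have := (Sop i0 b' H0 Hnn Hsub k).le_opNorm (lp.single 2 (1 : Word n) (1 : ℂ))
  rw [h1, h2, mul_one] at this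
  exact this

lemma Sop_norm (k : ℕ) : ‖Sop i0 b' H0 Hnn Hsub k‖ = b' k :=
  le_antisymm (Sop_norm_le i0 b' H0 Hnn Hsub k) (Sop_norm_ge i0 b' H0 Hnn Hsub k)

lemma Sop_pow (Hvan : ∀ k, b' k = 0 → b' (k + 1) = 0) (k : ℕ) :
    Sop i0 b' H0 Hnn Hsub 1 ^ k = Sop i0 b' H0 Hnn Hsub k := by
  induction k with
  | zero =>
    rw [pow_zero]
    refine ext_of_single fun α z => ?_
    rw [Sop_single]
    have hsig : sig i0 0 α = α := by
      simp [sig, List.replicate_zero, FreeMonoid.ofList_nil]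
    rw [hsig, dwt_zero]
    simp
  | succ k ih =>
    rw [pow_succ, ih]
    refine ext_of_single fun α z => ?_
    rw [ContinuousLinearMap.mul_apply, Sop_single, Sop_single, Sop_single]
    have hsig : sig i0 k (sig i0 1 α) = sig i0 (k + 1) α := by
      simp only [sig, ← mul_assoc, ← FreeMonoid.ofList_append]
      rw [show List.replicate k i0 ++ List.replicate 1 i0 = List.replicate (k + 1) i0 from
        (List.replicate_add k 1 i0).symm]
    have hlen : FreeMonoid.length (sig i0 1 α) = FreeMonoid.length α + 1 := by
      simp only [sig, FreeMonoid.length_mul]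
      have : FreeMonoid.length (FreeMonoid.ofList (List.replicate 1 i0)) = 1 := rfl
      rw [this]
      omega
    rw [hsig, hlen]
    congr 1
    rw [dwt_succ b' Hvan k (FreeMonoid.length α)]
    push_cast
    ring

end Shift

section Main

variable (i0 : Fin n) (b' : ℕ → ℝ)
variable (H0 : b' 0 = 1) (Hnn : ∀ k, 0 ≤ b' k)
  (Hsub : ∀ k m, b' (k + m) ≤ b' k * b' m)

def Top : Fin n → Fock n →L[ℂ] Fock n :=
  fun i => if i = i0 then Sop i0 b' H0 Hnn Hsub 1 else 0

lemma rowSum_Top (Hvan : ∀ k, b' k = 0 → b' (k + 1) = 0) (k : ℕ) :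
    rowSum (Top i0 b' H0 Hnn Hsub) k
      = Sop i0 b' H0 Hnn Hsub k * adjoint (Sop i0 b' H0 Hnn Hsub k) := by
  rw [rowSum]
  rw [Finset.sum_eq_single_of_mem (fun _ : Fin k => i0) (Finset.mem_univ _)]
  · have hw : wordOfFn (fun _ : Fin k => i0) = FreeMonoid.ofList (List.replicate k i0) := by
      simp [wordOfFn, List.ofFn_const]
    have hWc : wordOp (Top i0 b' H0 Hnn Hsub) (wordOfFn (fun _ : Fin k => i0))
        = Sop i0 b' H0 Hnn Hsub k := by
      rw [hw, wordOp]
      rw [FreeMonoid.toList_ofList, List.map_replicate, List.prod_replicate]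
      have hT : Top i0 b' H0 Hnn Hsub i0 = Sop i0 b' H0 Hnn Hsub 1 := if_pos rfl
      rw [hT]
      exact Sop_pow i0 b' H0 Hnn Hsub Hvan k
    rw [hWc]
  · intro f _ hf
    have hj : ∃ j, f j ≠ i0 := by
      by_contra hc
      push_neg at hc
      exact hf (funext hc)
    obtain ⟨j, hj⟩ := hj
    have hW : wordOp (Top i0 b' H0 Hnn Hsub) (wordOfFn f) = 0 := by
      apply List.prod_eq_zero
      refine List.mem_map.mpr ⟨f j, ?_, ?_⟩
      · show f j ∈ FreeMonoid.toList (wordOfFn f)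
        rw [wordOfFn, FreeMonoid.toList_ofList]
        exact List.mem_ofFn.mpr ⟨j, rfl⟩
      · exact if_neg hj
    rw [hW]
    simp

lemma sqrt_norm_rowSum (Hvan : ∀ k, b' k = 0 → b' (k + 1) = 0) (k : ℕ) :
    Real.sqrt ‖rowSum (Top i0 b' H0 Hnn Hsub) k‖ = b' k := by
  rw [rowSum_Top i0 b' H0 Hnn Hsub Hvan k]
  have h3 : ‖ContinuousLinearMap.adjoint (Sop i0 b' H0 Hnn Hsub k)‖
      = ‖Sop i0 b' H0 Hnn Hsub k‖ :=
    LinearIsometryEquiv.norm_map ContinuousLinearMap.adjoint _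
  have h2 := ContinuousLinearMap.norm_adjoint_comp_self
    (ContinuousLinearMap.adjoint (Sop i0 b' H0 Hnn Hsub k))
  rw [adjoint_adjoint] at h2
  rw [ContinuousLinearMap.mul_def, h2, h3, Sop_norm, Real.sqrt_mul_self (Hnn k)]

end Main

lemma dichotomy (b : ℕ → ℝ) (hnn : ∀ k, 1 ≤ k → 0 ≤ b k)
    (hsub : ∀ k m, 1 ≤ k → 1 ≤ m → b (k + m) ≤ b k * b m) :
    (∃ p : ℕ, (∀ k, 1 ≤ k → k ≤ p → 0 < b k) ∧ ∀ k, p < k → b k = 0) ∨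
      ∀ k, 1 ≤ k → 0 < b k := by
  by_cases h : ∀ k, 1 ≤ k → 0 < b k
  · exact Or.inr h
  · left
    push_neg at h
    obtain ⟨k₀, hk₀1, hk₀⟩ := h
    have hP : ∃ k, 1 ≤ k ∧ b k = 0 := ⟨k₀, hk₀1, le_antisymm hk₀ (hnn k₀ hk₀1)⟩
    classical
    have hps := Nat.find_spec hP
    refine ⟨Nat.find hP - 1, fun k hk1 hkp => ?_, fun k hk => ?_⟩
    · have hkltp : k < Nat.find hP := by
        have hp1 : 1 ≤ Nat.find hP := hps.1
        omega
      have hmin := Nat.find_min hP hkltp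
      have hbk : b k ≠ 0 := fun hc => hmin ⟨hk1, hc⟩
      exact lt_of_le_of_ne (hnn k hk1) (Ne.symm hbk)
    · have hpk : Nat.find hP ≤ k := by
        have hp1 : 1 ≤ Nat.find hP := hps.1
        omega
      rcases Nat.exists_eq_add_of_le hpk with ⟨j, rfl⟩
      rcases Nat.eq_zero_or_pos j with hj | hj
      · simpa [hj] using hps.2
      · have h1 := hsub (Nat.find hP) j hps.1 hj
        rw [hps.2, zero_mul] at h1
        exact le_antisymm h1 (hnn _ (by omega))

end Stmt2Aux

theorem stmt_2 (n : ℕ) (hn : 1 ≤ n) (a : ℕ → ℂ) :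
    (∃ T : Fin n → Fock n →L[ℂ] Fock n,
        ∀ k : ℕ, 1 ≤ k → a k = (Real.sqrt ‖rowSum T k‖ : ℂ)) ↔
      ∃ b : ℕ → ℝ,
        (∀ k, 1 ≤ k → a k = (b k : ℂ)) ∧
        (∀ k, 1 ≤ k → 0 ≤ b k) ∧
        (∀ k m, 1 ≤ k → 1 ≤ m → b (k + m) ≤ b k * b m) ∧
        ((∃ p : ℕ, (∀ k, 1 ≤ k → k ≤ p → 0 < b k) ∧ ∀ k, p < k → b k = 0) ∨
          ∀ k, 1 ≤ k → 0 < b k) := by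
  constructor
  · rintro ⟨T, hT⟩
    have hsub : ∀ k m, 1 ≤ k → 1 ≤ m →
        Real.sqrt ‖rowSum T (k + m)‖ ≤ Real.sqrt ‖rowSum T k‖ * Real.sqrt ‖rowSum T m‖ := by
      intro k m _ _
      rw [← Real.sqrt_mul (norm_nonneg _)]
      exact Real.sqrt_le_sqrt (Stmt2Aux.norm_rowSum_add_le T k m)
    exact ⟨fun k => Real.sqrt ‖rowSum T k‖, fun k hk => hT k hk,
      fun k _ => Real.sqrt_nonneg _, hsub,
      Stmt2Aux.dichotomy _ (fun k _ => Real.sqrt_nonneg _) hsub⟩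
  · rintro ⟨b, hab, hnn, hsub, hdich⟩
    have H0 : (fun k => if k = 0 then (1 : ℝ) else b k) 0 = 1 := if_pos rfl
    set b' : ℕ → ℝ := fun k => if k = 0 then 1 else b k with hb'
    have Hnn' : ∀ k, 0 ≤ b' k := by
      intro k
      cases k with
      | zero => rw [H0]; norm_num
      | succ k =>
        have : b' (k + 1) = b (k + 1) := if_neg (by omega)
        rw [this]
        exact hnn (k + 1) (by omega)
    have Hsub' : ∀ k m, b' (k + m) ≤ b' k * b' m := by
      intro k m
      rcases Nat.eq_zero_or_pos k with hk | hk
      · subst hk; rw [zero_add, H0, one_mul]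
      rcases Nat.eq_zero_or_pos m with hm | hm
      · subst hm; rw [add_zero, H0, mul_one]
      have e1 : b' (k + m) = b (k + m) := if_neg (by omega)
      have e2 : b' k = b k := if_neg (by omega)
      have e3 : b' m = b m := if_neg (by omega)
      rw [e1, e2, e3]
      exact hsub k m hk hm
    have Hvan : ∀ k, b' k = 0 → b' (k + 1) = 0 := by
      intro k hk
      rcases Nat.eq_zero_or_pos k with h0 | h0
      · subst h0; rw [H0] at hk; norm_num at hk
      have hbk : b k = 0 := by
        have hk2 : (if k = 0 then (1:ℝ) else b k) = 0 := hk
        rwa [if_neg (by omega : ¬ k = 0)] at hk2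
      have e : b' (k + 1) = b (k + 1) := if_neg (by omega)
      rw [e]
      rcases hdich with ⟨p, hpos, hzero⟩ | hall
      · have hkp : p < k := by
          by_contra hc
          push_neg at hc
          exact absurd hbk (ne_of_gt (hpos k h0 hc))
        exact hzero (k + 1) (by omega)
      · exact absurd hbk (ne_of_gt (hall k h0))
    refine ⟨Stmt2Aux.Top (⟨0, hn⟩ : Fin n) b' H0 Hnn' Hsub', fun k hk => ?_⟩
    rw [hab k hk,
      Stmt2Aux.sqrt_norm_rowSum (⟨0, hn⟩ : Fin n) b' H0 Hnn' Hsub' Hvan k,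
      show b' k = b k from if_neg (by omega)]


end
end

section
/- Let n ≥ 1 and let W = (W₁,…,Wₙ) be the weighted left multi-shift on F²(Hₙ) associated with a weight sequence μ = {μ_β}_{|β|≥1} of strictly positive real numbers with sup_{α∈𝔽ₙ⁺} μ_{g_iα} < ∞ for each i. Then every closed subspace M ⊆ F²(Hₙ) with M ≠ {0} and W_i M ⊆ M for all i ∈ {1,…,n} is infinite-dimensional. -/
open Filter ContinuousLinearMap
open scoped ComplexConjugate

noncomputable section

attribute [local instance] Classical.decEq

-- aux
lemma fock_inner {n : ℕ} (β : Word n) (x : Fock n) :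
    (innerSL ℂ (fockE β)) x = x β := by
  simp [fockE, lp.inner_single_left, RCLike.inner_apply]

lemma coord_W_hasSum {n : ℕ} {μ : Word n → ℝ} {W : Fin n → Fock n →L[ℂ] Fock n}
    (hW : IsWeightedShift μ W) (i : Fin n) (x : Fock n) (β : Word n) :
    HasSum (fun γ : Word n => if β = FreeMonoid.of i * γ then (μ β : ℂ) * x γ else 0)
      ((W i x : Word n → ℂ) β) := by
  have h1 : HasSum (fun γ : Word n => lp.single 2 γ (x γ)) x :=
    lp.hasSum_single (by norm_num) x
  have h2 := h1.mapL ((innerSL ℂ (fockE β)).comp (W i))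
  rw [ContinuousLinearMap.comp_apply, fock_inner] at h2
  convert h2 using 2 with γ
  case e'_3 => rfl
  have : lp.single 2 γ (x γ) = (x γ) • fockE γ := by
    rw [fockE, ← lp.single_smul]
    norm_num
  rw [ContinuousLinearMap.comp_apply, this, map_smul, hW i γ, map_smul, fock_inner,
    lp.coeFn_smul, Pi.smul_apply]
  simp only [smul_eq_mul, fockE]
  by_cases h : β = FreeMonoid.of i * γ
  · subst h
    rw [lp.single_apply_self]
    simp [mul_comm]
  · rw [lp.single_apply_ne _ _ _ h]
    simp [h]

lemma coord_W_cons {n : ℕ} {μ : Word n → ℝ} {W : Fin n → Fock n →L[ℂ] Fock n}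
    (hW : IsWeightedShift μ W) (i : Fin n) (x : Fock n) (γ : Word n) :
    (W i x : Word n → ℂ) (FreeMonoid.of i * γ) =
      (μ (FreeMonoid.of i * γ) : ℂ) * x γ := by
  refine (coord_W_hasSum hW i x (FreeMonoid.of i * γ)).unique ?_
  have : (fun γ' : Word n => if FreeMonoid.of i * γ = FreeMonoid.of i * γ' then
      (μ (FreeMonoid.of i * γ) : ℂ) * x γ' else 0) =
      fun γ' : Word n => if γ' = γ then (μ (FreeMonoid.of i * γ) : ℂ) * x γ else 0 := by
    funext γ'
    by_cases h : γ' = γ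
    · subst h; simp
    · rw [if_neg h, if_neg]
      intro hc
      exact h (mul_left_cancel hc).symm
  rw [this]
  exact hasSum_ite_eq γ _

lemma coord_W_not {n : ℕ} {μ : Word n → ℝ} {W : Fin n → Fock n →L[ℂ] Fock n}
    (hW : IsWeightedShift μ W) (i : Fin n) (x : Fock n) (β : Word n)
    (h : ∀ γ : Word n, β ≠ FreeMonoid.of i * γ) :
    (W i x : Word n → ℂ) β = 0 := by
  refine (coord_W_hasSum hW i x β).unique ?_
  have : (fun γ : Word n => if β = FreeMonoid.of i * γ then (μ β : ℂ) * x γ else 0) =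
      fun _ : Word n => (0 : ℂ) := by
    funext γ; rw [if_neg (h γ)]
  rw [this]
  exact hasSum_zero



lemma length_pow_of {n : ℕ} (i : Fin n) (k : ℕ) :
    FreeMonoid.length ((FreeMonoid.of i) ^ k) = k := by
  induction k with
  | zero => simp
  | succ k ih => rw [pow_succ, FreeMonoid.length_mul, ih, FreeMonoid.length_of]


theorem stmt_6 (n : ℕ) (hn : 1 ≤ n) (μ : Word n → ℝ)
    (hμ : ∀ β : Word n, 1 ≤ FreeMonoid.length β → 0 < μ β)
    (hbdd : BddWeights μ)
    (W : Fin n → Fock n →L[ℂ] Fock n) (hW : IsWeightedShift μ W)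
    (M : Submodule ℂ (Fock n)) (hMc : IsClosed (M : Set (Fock n))) (hM0 : M ≠ ⊥)
    (hinv : ∀ (i : Fin n), ∀ x ∈ M, W i x ∈ M) :
    ¬ FiniteDimensional ℂ M := by
  classical
  intro hfin
  obtain ⟨x, hxM, hx0⟩ := Submodule.exists_mem_ne_zero_of_ne_bot hM0
  have hxc : ∃ γ : Word n, (x : Word n → ℂ) γ ≠ 0 := by
    by_contra h
    push_neg at h
    apply hx0
    apply lp.ext
    funext γ
    simp [h γ]
  set i0 : Fin n := ⟨0, hn⟩ with hi0
  obtain ⟨α0, hα0⟩ := hxc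
  have hP : ∃ m, ∃ γ : Word n, FreeMonoid.length γ = m ∧ (x : Word n → ℂ) γ ≠ 0 :=
    ⟨_, α0, rfl, hα0⟩
  obtain ⟨α, hαd, hαne⟩ := Nat.find_spec hP
  set d := Nat.find hP with hd
  have hmin : ∀ γ : Word n, FreeMonoid.length γ < d → (x : Word n → ℂ) γ = 0 := by
    intro γ hγ
    by_contra h
    exact Nat.find_min hP hγ ⟨γ, rfl, h⟩
  let y : ℕ → Fock n := fun k => ((W i0) ^ k) x
  have hy_succ : ∀ k, y (k + 1) = W i0 (y k) := by
    intro k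
    show ((W i0) ^ (k + 1)) x = _
    rw [pow_succ']
    rfl
  have hy0 : y 0 = x := by
    show ((W i0) ^ 0) x = x
    rw [pow_zero]
    rfl
  have hyM : ∀ k, y k ∈ M := by
    intro k
    induction k with
    | zero => rw [hy0]; exact hxM
    | succ k ih => rw [hy_succ]; exact hinv i0 _ ih
  have hz : ∀ k (β : Word n), FreeMonoid.length β < k + d → (y k : Word n → ℂ) β = 0 := by
    intro k
    induction k with
    | zero => intro β hβ; rw [hy0]; exact hmin β (by simpa using hβ)
    | succ k ih =>
      intro β hβ
      rw [hy_succ]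
      rcases hcons : FreeMonoid.toList β with _ | ⟨j, l⟩
      · refine coord_W_not hW i0 (y k) β ?_
        intro γ hc
        apply_fun FreeMonoid.toList at hc
        rw [hcons] at hc
        simp [FreeMonoid.toList_mul] at hc
      · have hβeq : β = FreeMonoid.of j * FreeMonoid.ofList l := by
          apply FreeMonoid.toList.injective
          simp [hcons, FreeMonoid.toList_mul]
        by_cases hj : j = i0
        · subst hj
          rw [hβeq, coord_W_cons hW]
          have hll : (y k : Word n → ℂ) (FreeMonoid.ofList l) = 0 := by
            apply ih
            have : FreeMonoid.length β = 1 + FreeMonoid.length (FreeMonoid.ofList l) := by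
              rw [hβeq, FreeMonoid.length_mul, FreeMonoid.length_of]
            omega
          rw [hll, mul_zero]
        · refine coord_W_not hW i0 (y k) β ?_
          intro γ hc
          rw [hβeq] at hc
          have := congrArg FreeMonoid.toList hc
          simp [FreeMonoid.toList_mul] at this
          exact hj this.1
  have hne : ∀ k, (y k : Word n → ℂ) ((FreeMonoid.of i0) ^ k * α) ≠ 0 := by
    intro k
    induction k with
    | zero => rw [hy0]; simpa using hαne
    | succ k ih =>
      rw [hy_succ]
      have hpow : (FreeMonoid.of i0) ^ (k + 1) * α
          = FreeMonoid.of i0 * ((FreeMonoid.of i0) ^ k * α) := by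
        rw [pow_succ', mul_assoc]
      rw [hpow, coord_W_cons hW]
      refine mul_ne_zero ?_ ih
      have hlen1 : 1 ≤ FreeMonoid.length
          (FreeMonoid.of i0 * ((FreeMonoid.of i0) ^ k * α)) := by
        rw [FreeMonoid.length_mul, FreeMonoid.length_of]
        omega
      exact Complex.ofReal_ne_zero.mpr (hμ _ hlen1).ne'
  have hlen : ∀ k, FreeMonoid.length ((FreeMonoid.of i0) ^ k * α) = k + d := by
    intro k
    rw [FreeMonoid.length_mul, length_pow_of, hαd]
  have hli : LinearIndependent ℂ y := by
    rw [linearIndependent_iff']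
    intro s g hsum k
    induction k using Nat.strong_induction_on with
    | _ k IH =>
    intro hk
    have h0 := congrArg (fun z => (innerSL ℂ (fockE ((FreeMonoid.of i0) ^ k * α))) z) hsum
    simp only [map_sum, map_smul, map_zero, fock_inner, smul_eq_mul] at h0
    rw [Finset.sum_eq_single k] at h0
    · rcases mul_eq_zero.mp h0 with h | h
      · exact h
      · exact absurd h (hne k)
    · intro j hj hjk
      rcases lt_or_gt_of_ne hjk with h | h
      · rw [IH j h hj, zero_mul]
      · rw [hz j _ (by rw [hlen]; omega), mul_zero]
    · intro hk'
      exact absurd hk hk'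
  let v : ℕ → M := fun k => ⟨y k, hyM k⟩
  have hliv : LinearIndependent ℂ v :=
    LinearIndependent.of_comp M.subtype (by convert hli; rfl)
  haveI : Module.Finite ℂ M := hfin
  haveI := hliv.finite
  exact not_finite ℕ


end
end

section
/- Let n ≥ 1, let H be a Hilbert space, and let T = (T₁,…,Tₙ) be a nilpotent n-tuple of bounded operators on H of index m ≥ 2, i.e. T_α = 0 for every α ∈ 𝔽ₙ⁺ with |α| = m and T_β ≠ 0 for some β with |β| = m−1. Then there exists a weight sequence μ = {μ_β}_{|β|≥1} of nonnegative reals, with μ_β > 0 for 1 ≤ |β| ≤ m−1 and μ_β = 0 for |β| ≥ m, whose associated weighted left multi-shift W = (W₁,…,Wₙ) on F²(Hₙ) is nilpotent of index m, and such that: there exist a closed subspace M ⊆ ℓ²(𝔽ₙ⁺; H) invariant under each W_i^*⊗I_H and a bounded invertible operator X : H → M with ‖X‖·‖X⁻¹‖ ≤ √(∑_{k=0}^{m−1} 1/(k+1)²) and T_i^* = X⁻¹((W_i^*⊗I_H)|_M)X for each i; consequently ‖∑_α c_α T_α‖ ≤ √(∑_{k=0}^{m−1} 1/(k+1)²)·‖∑_α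 c_α W_α‖ for every finitely supported family (c_α)_{α∈𝔽ₙ⁺} of complex numbers. -/
open Filter ContinuousLinearMap
open scoped ComplexConjugate

noncomputable section

attribute [local instance] Classical.decEq

namespace StmtAux

variable {n : ℕ}

/-- head of a word -/
def hd? (β : Word n) : Option (Fin n) := (FreeMonoid.toList β).head?

/-- tail of a word -/
def tl (β : Word n) : Word n := FreeMonoid.ofList (FreeMonoid.toList β).tail

lemma length_eq_toList (β : Word n) :
    FreeMonoid.length β = (FreeMonoid.toList β).length := rfl

lemma hd_of_mul (i : Fin n) (α : Word n) : hd? (FreeMonoid.of i * α) = some i := rfl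

lemma tl_of_mul (i : Fin n) (α : Word n) : tl (FreeMonoid.of i * α) = α := rfl

lemma eq_of_hd (i : Fin n) {β : Word n} (h : hd? β = some i) :
    FreeMonoid.of i * tl β = β := by
  rcases hl : FreeMonoid.toList β with _ | ⟨j, t⟩
  · rw [hd?, hl] at h; simp at h
  · rw [hd?, hl] at h
    simp only [List.head?_cons, Option.some.injEq] at h
    subst h
    apply FreeMonoid.toList.injective
    rw [FreeMonoid.toList_mul, tl, hl, FreeMonoid.toList_of, FreeMonoid.toList_ofList]
    simp

lemma length_pos_of_hd {i : Fin n} {β : Word n} (h : hd? β = some i) :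
    1 ≤ FreeMonoid.length β := by
  rcases hl : FreeMonoid.toList β with _ | ⟨j, t⟩
  · rw [hd?, hl] at h; simp at h
  · rw [length_eq_toList, hl]; simp

lemma length_tl {i : Fin n} {β : Word n} (h : hd? β = some i) :
    FreeMonoid.length (tl β) + 1 = FreeMonoid.length β := by
  conv_rhs => rw [← eq_of_hd i h]
  rw [FreeMonoid.length_mul, FreeMonoid.length_of]
  ring

lemma length_of_mul (i : Fin n) (α : Word n) :
    FreeMonoid.length (FreeMonoid.of i * α) = FreeMonoid.length α + 1 := by
  rw [FreeMonoid.length_mul, FreeMonoid.length_of]; ring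

lemma length_eq_zero_iff {β : Word n} : FreeMonoid.length β = 0 ↔ β = 1 := by
  constructor
  · intro h
    apply FreeMonoid.toList.injective
    rw [FreeMonoid.toList_one]
    exact List.length_eq_zero_iff.mp h
  · rintro rfl; rfl

/-- existence of an `ofFn` representation -/
lemma exists_ofFn (l : List (Fin n)) (k : ℕ) (hk : l.length = k) :
    ∃ f : Fin k → Fin n, List.ofFn f = l := by
  subst hk
  exact ⟨l.get, List.ofFn_get l⟩

/-- the finset of words of length `k` -/
def Fk (n k : ℕ) : Finset (Word n) := Finset.image wordOfFn (Finset.univ : Finset (Fin k → Fin n))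

lemma mem_Fk {k : ℕ} {α : Word n} : α ∈ Fk n k ↔ FreeMonoid.length α = k := by
  constructor
  · rintro h
    simp only [Fk, Finset.mem_image] at h
    obtain ⟨f, -, rfl⟩ := h
    rw [length_eq_toList]; simp [wordOfFn]
  · intro h
    obtain ⟨f, hf⟩ := exists_ofFn (FreeMonoid.toList α) k h
    simp only [Fk, Finset.mem_image]
    exact ⟨f, Finset.mem_univ _, FreeMonoid.toList.injective (by simp [wordOfFn, hf])⟩

/-- the finset of words of length `< m` -/
def FF (n m : ℕ) : Finset (Word n) := (Finset.range m).biUnion (Fk n)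

lemma mem_FF {m : ℕ} {α : Word n} : α ∈ FF n m ↔ FreeMonoid.length α < m := by
  simp only [FF, Finset.mem_biUnion, Finset.mem_range, mem_Fk]
  constructor
  · rintro ⟨k, hk, rfl⟩; exact hk
  · intro h; exact ⟨_, h, rfl⟩

end StmtAux


namespace StmtAux

variable {n : ℕ} {E : Type*} [NormedAddCommGroup E] [InnerProductSpace ℂ E]

abbrev lpE (n : ℕ) (E : Type*) [NormedAddCommGroup E] [InnerProductSpace ℂ E] :=
  lp (fun _ : Word n => E) 2

lemma lpSingle_zero (β : Word n) : lp.single 2 β (0 : E) = (0 : lpE n E) := by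
  apply lp.ext; funext γ
  by_cases h : γ = β
  · subst h; rw [lp.single_apply_self]; rfl
  · rw [lp.single_apply_ne _ _ _ h]; rfl

lemma lpSingle_add (β : Word n) (a b : E) :
    (lp.single 2 β (a + b) : lpE n E) = lp.single 2 β a + lp.single 2 β b := by
  apply lp.ext; funext γ
  by_cases h : γ = β
  · subst h; simp only [lp.coeFn_add, Pi.add_apply, lp.single_apply_self]
  · simp only [lp.coeFn_add, Pi.add_apply, lp.single_apply_ne _ _ _ h, add_zero]

lemma norm_single' (β : Word n) (a : E) : ‖(lp.single 2 β a : lpE n E)‖ = ‖a‖ := by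
  have := lp.norm_single (E := fun _ : Word n => E) (p := 2) (by norm_num) β a
  simpa using this

/-- `lp.single` as a continuous linear map. -/
def sCLM (β : Word n) : E →L[ℂ] lpE n E :=
  LinearMap.mkContinuous
    { toFun := fun a => lp.single 2 β a
      map_add' := lpSingle_add β
      map_smul' := fun c a => by
        show (lp.single 2 β (c • a) : lpE n E) = c • (lp.single 2 β a : lpE n E)
        exact lp.single_smul (E := fun _ : Word n => E) 2 β c a }
    1 (fun a => by
      show ‖(lp.single 2 β a : lpE n E)‖ ≤ 1 * ‖a‖
      rw [norm_single', one_mul])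

lemma sCLM_apply (β : Word n) (a : E) : sCLM β a = lp.single 2 β a := by rfl

/-- coordinate evaluation as a continuous linear map. -/
def eCLM (β : Word n) : lpE n E →L[ℂ] E :=
  LinearMap.mkContinuous
    { toFun := fun x => x β
      map_add' := fun x y => rfl
      map_smul' := fun c x => rfl }
    1 (fun x => by
      show ‖(x : ∀ _ : Word n, E) β‖ ≤ 1 * ‖x‖
      rw [one_mul]
      exact lp.norm_apply_le_norm (by norm_num) x β)

lemma eCLM_apply (β : Word n) (x : lpE n E) : eCLM β x = x β := rfl

lemma eCLM_single (β γ : Word n) (a : E) :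
    eCLM β (lp.single 2 γ a : lpE n E) = if β = γ then a else 0 := by
  rw [eCLM_apply]
  by_cases h : β = γ
  · subst h; rw [if_pos rfl, lp.single_apply_self]
  · rw [if_neg h, lp.single_apply_ne _ _ _ h]

lemma coord_sum_single (s : Finset (Word n)) (v : Word n → E) (γ : Word n) :
    ((∑ β ∈ s, lp.single 2 β (v β) : lpE n E) : ∀ _ : Word n, E) γ
      = if γ ∈ s then v γ else 0 := by
  rw [lp.coeFn_sum]
  simp only [Finset.sum_apply]
  by_cases h : γ ∈ s
  · rw [if_pos h]
    refine (Finset.sum_eq_single_of_mem γ h ?_).trans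
      (lp.single_apply_self (E := fun _ : Word n => E) 2 γ (v γ))
    intro β _ hβ
    exact lp.single_apply_ne (E := fun _ : Word n => E) 2 β (v β) (Ne.symm hβ)
  · rw [if_neg h]
    exact Finset.sum_eq_zero fun β hβ =>
      lp.single_apply_ne (E := fun _ : Word n => E) 2 β (v β) (fun hγ => h (hγ ▸ hβ))

end StmtAux

namespace StmtAux

variable {n : ℕ} {E : Type*} [NormedAddCommGroup E] [InnerProductSpace ℂ E]

/-- words of length `< m` starting with `i` -/
def FFi (n m : ℕ) (i : Fin n) : Finset (Word n) :=
  (FF n m).filter (fun β => hd? β = some i)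

/-- the weighted shift operator -/
def shift (μ : Word n → ℝ) (m : ℕ) (i : Fin n) : lpE n E →L[ℂ] lpE n E :=
  ∑ β ∈ FFi n m i, sCLM β ∘L ((μ β : ℂ) • eCLM (tl β))

lemma shift_apply (μ : Word n → ℝ) (m : ℕ) (i : Fin n) (x : lpE n E) :
    shift μ m i x = ∑ β ∈ FFi n m i, lp.single 2 β ((μ β : ℂ) • x (tl β)) := by
  simp only [shift, ContinuousLinearMap.sum_apply, ContinuousLinearMap.comp_apply,
    ContinuousLinearMap.smul_apply, sCLM_apply, eCLM_apply]

/-- the backward weighted shift operator -/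
def bshift (μ : Word n → ℝ) (m : ℕ) (i : Fin n) : lpE n E →L[ℂ] lpE n E :=
  ∑ α ∈ FF n (m - 1), sCLM α ∘L ((μ (FreeMonoid.of i * α) : ℂ) • eCLM (FreeMonoid.of i * α))

lemma bshift_apply (μ : Word n → ℝ) (m : ℕ) (i : Fin n) (x : lpE n E) :
    bshift μ m i x = ∑ α ∈ FF n (m - 1),
      lp.single 2 α ((μ (FreeMonoid.of i * α) : ℂ) • x (FreeMonoid.of i * α)) := by
  simp only [bshift, ContinuousLinearMap.sum_apply, ContinuousLinearMap.comp_apply,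
    ContinuousLinearMap.smul_apply, sCLM_apply, eCLM_apply]

lemma mem_FFi {m : ℕ} {i : Fin n} {β : Word n} :
    β ∈ FFi n m i ↔ FreeMonoid.length β < m ∧ hd? β = some i := by
  simp [FFi, Finset.mem_filter, mem_FF]

lemma shift_single (μ : Word n → ℝ) (m : ℕ)
    (hμ0 : ∀ β : Word n, m ≤ FreeMonoid.length β → μ β = 0) (i : Fin n)
    (α : Word n) (h : E) :
    shift μ m i (lp.single 2 α h)
      = (μ (FreeMonoid.of i * α) : ℂ) • lp.single 2 (FreeMonoid.of i * α) h := by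
  rw [shift_apply]
  by_cases hlen : FreeMonoid.length α + 1 < m
  · rw [Finset.sum_eq_single_of_mem (FreeMonoid.of i * α)
      (mem_FFi.mpr ⟨by rw [length_of_mul]; exact hlen, hd_of_mul i α⟩)]
    · rw [tl_of_mul]
      have : ((lp.single 2 α h : lpE n E) : ∀ _ : Word n, E) α = h :=
        lp.single_apply_self (E := fun _ : Word n => E) 2 α h
      rw [this, lp.single_smul]
    · intro β hβ hne
      obtain ⟨-, hhd⟩ := mem_FFi.mp hβ
      have htl : tl β ≠ α := by
        intro he
        exact hne (by rw [← eq_of_hd i hhd, he])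
      have : ((lp.single 2 α h : lpE n E) : ∀ _ : Word n, E) (tl β) = 0 :=
        lp.single_apply_ne (E := fun _ : Word n => E) 2 α h htl
      rw [this, smul_zero, lpSingle_zero]
  · have h0 : μ (FreeMonoid.of i * α) = 0 := by
      apply hμ0
      rw [length_of_mul]
      omega
    rw [h0]
    push_cast
    rw [zero_smul]
    apply Finset.sum_eq_zero
    intro β hβ
    obtain ⟨hl, hhd⟩ := mem_FFi.mp hβ
    have htl : tl β ≠ α := by
      intro he
      rw [← eq_of_hd i hhd, he, length_of_mul] at hl
      omega
    have : ((lp.single 2 α h : lpE n E) : ∀ _ : Word n, E) (tl β) = 0 :=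
      lp.single_apply_ne (E := fun _ : Word n => E) 2 α h htl
    rw [lp.single_apply] at this
    rw [this, smul_zero, lpSingle_zero]

variable [CompleteSpace E]

lemma bshift_eq_adjoint (μ : Word n → ℝ) (m : ℕ) (i : Fin n) :
    bshift (E := E) μ m i = ContinuousLinearMap.adjoint (shift μ m i) := by
  rw [ContinuousLinearMap.eq_adjoint_iff]
  intro x y
  rw [bshift_apply, shift_apply, sum_inner, inner_sum]
  refine Finset.sum_nbij' (fun α => FreeMonoid.of i * α) (fun β => tl β) ?_ ?_ ?_ ?_ ?_
  · intro α hα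
    rw [mem_FF] at hα
    refine mem_FFi.mpr ⟨by rw [length_of_mul]; omega, hd_of_mul i α⟩
  · intro β hβ
    obtain ⟨hl, hhd⟩ := mem_FFi.mp hβ
    have := length_tl hhd
    rw [mem_FF]
    show FreeMonoid.length (tl β) < m - 1
    omega
  · intro α _
    exact tl_of_mul i α
  · intro β hβ
    obtain ⟨-, hhd⟩ := mem_FFi.mp hβ
    exact eq_of_hd i hhd
  · intro α _
    rw [lp.inner_single_left, lp.inner_single_right, tl_of_mul,
      inner_smul_left, inner_smul_right, Complex.conj_ofReal]

end StmtAux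

namespace StmtAux

variable {n : ℕ} {E : Type*} [NormedAddCommGroup E] [InnerProductSpace ℂ E]

/-- product of weights along a word -/
def prodμ (μ : Word n → ℝ) : List (Fin n) → Word n → ℝ
  | [], _ => 1
  | i :: t, α => μ (FreeMonoid.ofList (i :: t) * α) * prodμ μ t α

lemma ofList_cons (i : Fin n) (t : List (Fin n)) :
    FreeMonoid.ofList (i :: t) = FreeMonoid.of i * FreeMonoid.ofList t := rfl

lemma length_ofList (l : List (Fin n)) :
    FreeMonoid.length (FreeMonoid.ofList l) = l.length := rfl

lemma shift_word (μ : Word n → ℝ) (m : ℕ)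
    (hμ0 : ∀ β : Word n, m ≤ FreeMonoid.length β → μ β = 0) :
    ∀ (l : List (Fin n)) (α : Word n) (h : E),
      ((l.map (shift (E := E) μ m)).prod) (lp.single 2 α h)
        = ((prodμ μ l α : ℝ) : ℂ) • lp.single 2 (FreeMonoid.ofList l * α) h
  | [], α, h => by
    have h1 : FreeMonoid.ofList ([] : List (Fin n)) * α = α := one_mul α
    simp [prodμ, h1]
  | i :: t, α, h => by
    rw [List.map_cons, List.prod_cons, ContinuousLinearMap.mul_apply,
      shift_word μ m hμ0 t α h, map_smul, shift_single μ m hμ0 i, smul_smul,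
      ofList_cons, mul_assoc]
    norm_cast
    rw [prodμ, ofList_cons, mul_assoc, mul_comm (μ _)]

lemma prodμ_eq_zero (μ : Word n → ℝ) (m : ℕ)
    (hμ0 : ∀ β : Word n, m ≤ FreeMonoid.length β → μ β = 0)
    {l : List (Fin n)} (γ : Word n) (hl : m ≤ l.length) (hne : l ≠ []) :
    prodμ μ l γ = 0 := by
  cases l with
  | nil => exact absurd rfl hne
  | cons i t =>
    rw [prodμ, hμ0, zero_mul]
    rw [FreeMonoid.length_mul, length_ofList]
    simp only [List.length_cons] at hl ⊢
    omega

lemma shift_wordOp_zero (μ : Word n → ℝ) (m : ℕ)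
    (hμ0 : ∀ β : Word n, m ≤ FreeMonoid.length β → μ β = 0)
    (hm1 : 1 ≤ m) (f : Fin m → Fin n) :
    wordOp (fun i => shift (E := E) μ m i) (wordOfFn f) = 0 := by
  refine ContinuousLinearMap.ext fun x => ?_
  set A := wordOp (fun i => shift (E := E) μ m i) (wordOfFn f) with hA
  show A x = 0
  have hx : HasSum (fun γ : Word n => lp.single 2 γ (x γ)) x :=
    lp.hasSum_single (by norm_num) x
  have h2 : ∀ γ : Word n, A (lp.single 2 γ (x γ)) = 0 := by
    intro γ
    have : A (lp.single 2 γ (x γ))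
        = ((prodμ μ (List.ofFn f) γ : ℝ) : ℂ) •
            lp.single 2 (FreeMonoid.ofList (List.ofFn f) * γ) (x γ) :=
      shift_word μ m hμ0 (List.ofFn f) γ (x γ)
    rw [this, prodμ_eq_zero μ m hμ0 γ (by rw [List.length_ofFn])
      (by
        have : (List.ofFn f).length = m := List.length_ofFn
        intro hnil
        rw [hnil] at this
        simp at this
        omega)]
    push_cast
    rw [zero_smul]
  have hsum : HasSum (fun γ : Word n => A (lp.single 2 γ (x γ))) (A x) := hx.mapL A
  simp only [h2] at hsum
  exact hsum.unique hasSum_zero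

end StmtAux

namespace StmtAux

variable {n : ℕ}

/-- the weight sequence -/
def μd (m : ℕ) (r : ℝ) : Word n → ℝ := fun β =>
  if 1 ≤ FreeMonoid.length β ∧ FreeMonoid.length β ≤ m - 1 then
    r * ((FreeMonoid.length β : ℝ) + 1) / (FreeMonoid.length β : ℝ) else 0

lemma μd_nonneg {m : ℕ} {r : ℝ} (hr : 0 ≤ r) (β : Word n) : 0 ≤ μd m r β := by
  unfold μd
  split_ifs with h
  · have h1 : (1 : ℝ) ≤ (FreeMonoid.length β : ℝ) := by exact_mod_cast h.1
    positivity
  · exact le_refl 0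

lemma μd_pos {m : ℕ} {r : ℝ} (hr : 0 < r) {β : Word n}
    (h1 : 1 ≤ FreeMonoid.length β) (h2 : FreeMonoid.length β ≤ m - 1) : 0 < μd m r β := by
  unfold μd
  rw [if_pos ⟨h1, h2⟩]
  have h1' : (1 : ℝ) ≤ (FreeMonoid.length β : ℝ) := by exact_mod_cast h1
  positivity

lemma μd_zero_of_ge {m : ℕ} {r : ℝ} (hm : 1 ≤ m) {β : Word n}
    (h : m ≤ FreeMonoid.length β) : μd m r β = 0 := by
  unfold μd
  rw [if_neg]
  rintro ⟨-, h2⟩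
  omega

lemma μd_le {m : ℕ} {r : ℝ} (hr : 0 ≤ r) (β : Word n) : μd m r β ≤ 2 * r := by
  unfold μd
  split_ifs with h
  · obtain ⟨h1, -⟩ := h
    have h1' : (1 : ℝ) ≤ (FreeMonoid.length β : ℝ) := by exact_mod_cast h1
    rw [div_le_iff₀ (by linarith)]
    nlinarith
  · positivity

/-- the sequence `a_k = (r^k (k+1))⁻¹` -/
def aw (r : ℝ) (k : ℕ) : ℝ := (r ^ k * ((k : ℝ) + 1))⁻¹

lemma aw_zero (r : ℝ) : aw r 0 = 1 := by simp [aw]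

lemma aw_pos {r : ℝ} (hr : 0 < r) (k : ℕ) : 0 < aw r k := by
  unfold aw
  positivity

lemma aw_nonneg {r : ℝ} (hr : 0 < r) (k : ℕ) : 0 ≤ aw r k := (aw_pos hr k).le

lemma aw_le {r : ℝ} (hr : 1 ≤ r) {k : ℕ} (hk : 1 ≤ k) : aw r k ≤ r⁻¹ := by
  unfold aw
  apply inv_anti₀ (by linarith)
  have h1 : r ≤ r ^ k := by
    calc r = r ^ 1 := (pow_one r).symm
    _ ≤ r ^ k := pow_le_pow_right₀ hr hk
  nlinarith [pow_pos (by linarith : (0:ℝ) < r) k]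

lemma aw_inv {r : ℝ} (k : ℕ) : (aw r k)⁻¹ = r ^ k * ((k : ℝ) + 1) := by
  rw [aw, inv_inv]

/-- the fundamental weight recursion -/
lemma μd_mul_aw {m : ℕ} {r : ℝ} (hr : 0 < r) {k : ℕ} (hk : k + 1 ≤ m - 1) :
    ∀ β : Word n, FreeMonoid.length β = k + 1 →
      μd m r β * aw r (k + 1) = aw r k := by
  intro β hβ
  unfold μd aw
  rw [if_pos (by omega), hβ]
  push_cast
  have hrk : (0:ℝ) < r ^ k := pow_pos hr k
  have : (k:ℝ) + 1 ≠ 0 := by positivity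
  field_simp
  ring

lemma μd_val {m : ℕ} {r : ℝ} {k : ℕ} (h1 : 1 ≤ k) (h2 : k ≤ m - 1)
    (β : Word n) (hβ : FreeMonoid.length β = k) :
    μd m r β = r * ((k : ℝ) + 1) / (k : ℝ) := by
  unfold μd
  rw [hβ, if_pos ⟨h1, h2⟩]

lemma length_ofList_mul_one (l : List (Fin n)) :
    FreeMonoid.length (FreeMonoid.ofList l * 1) = l.length := by
  rw [mul_one, length_ofList]

lemma prodμ_μd_pos {m : ℕ} {r : ℝ} (hr : 0 < r) (hm : 1 ≤ m) :
    ∀ l : List (Fin n), l.length ≤ m - 1 → 0 < prodμ (μd m r) l 1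
  | [], _ => by rw [prodμ]; norm_num
  | i :: t, hl => by
    rw [prodμ]
    have ht : t.length ≤ m - 1 := by simp at hl; omega
    refine mul_pos (μd_pos hr ?_ ?_) (prodμ_μd_pos hr hm t ht)
    · rw [length_ofList_mul_one]; simp
    · rw [length_ofList_mul_one]; simpa using hl

lemma prodμ_μd_val {m : ℕ} {r : ℝ} (hr : 0 < r) (hm : 1 ≤ m) :
    ∀ l : List (Fin n), l.length ≤ m - 1 →
      prodμ (μd m r) l 1 = r ^ l.length * ((l.length : ℝ) + 1)
  | [], _ => by rw [prodμ]; norm_num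
  | i :: t, hl => by
    rw [prodμ]
    have ht : t.length ≤ m - 1 := by simp at hl; omega
    rw [prodμ_μd_val hr hm t ht,
      μd_val (k := t.length + 1) (by omega) (by simpa using hl) _
        (by rw [length_ofList_mul_one]; simp)]
    have h0 : ((t.length : ℝ) + 1) ≠ 0 := by positivity
    simp only [List.length_cons]
    push_cast
    field_simp
    ring

lemma prodμ_μd_eq_aw_inv {m : ℕ} {r : ℝ} (hr : 0 < r) (hm : 1 ≤ m)
    (l : List (Fin n)) (hl : l.length ≤ m - 1) :
    prodμ (μd m r) l 1 = (aw r l.length)⁻¹ := by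
  rw [prodμ_μd_val hr hm l hl, aw_inv]

end StmtAux

namespace StmtAux

variable {n : ℕ} {H : Type*} [NormedAddCommGroup H] [InnerProductSpace ℂ H]

lemma wordOp_one (T : Fin n → H →L[ℂ] H) : wordOp T 1 = 1 := rfl

lemma wordOp_cons (T : Fin n → H →L[ℂ] H) (i : Fin n) (β : Word n) :
    wordOp T (FreeMonoid.of i * β) = (T i) ∘L wordOp T β := rfl

lemma length_one_word : FreeMonoid.length (1 : Word n) = 0 := rfl

lemma wordOp_zero_of_long (T : Fin n → H →L[ℂ] H) (m : ℕ)
    (hnil : ∀ f : Fin m → Fin n, wordOp T (wordOfFn f) = 0)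
    {α : Word n} (hα : m ≤ FreeMonoid.length α) : wordOp T α = 0 := by
  have hα' : m ≤ (FreeMonoid.toList α).length := by rw [← length_eq_toList]; exact hα
  have hsplit : (FreeMonoid.toList α).take m ++ (FreeMonoid.toList α).drop m
      = FreeMonoid.toList α := List.take_append_drop m _
  have hlen : ((FreeMonoid.toList α).take m).length = m := by
    rw [List.length_take]; omega
  obtain ⟨f, hf⟩ := exists_ofFn ((FreeMonoid.toList α).take m) m hlen
  have h1 : wordOp T (wordOfFn f) = (((FreeMonoid.toList α).take m).map T).prod := by
    show ((FreeMonoid.toList (FreeMonoid.ofList (List.ofFn f))).map T).prod = _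
    rw [FreeMonoid.toList_ofList, hf]
  have h2 : wordOp T α = (((FreeMonoid.toList α).take m).map T).prod *
      (((FreeMonoid.toList α).drop m).map T).prod := by
    show ((FreeMonoid.toList α).map T).prod = _
    rw [← List.prod_append, ← List.map_append, hsplit]
  rw [h2, ← h1, hnil f, zero_mul]

end StmtAux


set_option maxHeartbeats 1000000 in
open StmtAux in
theorem stmt_14 (n : ℕ) (hn : 1 ≤ n)
    {H : Type*} [NormedAddCommGroup H] [InnerProductSpace ℂ H] [CompleteSpace H]
    (T : Fin n → H →L[ℂ] H) (m : ℕ) (hm : 2 ≤ m)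
    (hnil : ∀ f : Fin m → Fin n, wordOp T (wordOfFn f) = 0)
    (hnz : ∃ f : Fin (m - 1) → Fin n, wordOp T (wordOfFn f) ≠ 0) :
    ∃ μ : Word n → ℝ,
      (∀ β : Word n, 1 ≤ FreeMonoid.length β → 0 ≤ μ β) ∧ BddWeights μ ∧
      (∀ β : Word n, 1 ≤ FreeMonoid.length β → FreeMonoid.length β ≤ m - 1 → 0 < μ β) ∧
      (∀ β : Word n, m ≤ FreeMonoid.length β → μ β = 0) ∧
      ∃ W : Fin n → Fock n →L[ℂ] Fock n, IsWeightedShift μ W ∧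
        (∀ f : Fin m → Fin n, wordOp W (wordOfFn f) = 0) ∧
        (∃ f : Fin (m - 1) → Fin n, wordOp W (wordOfFn f) ≠ 0) ∧
        (∃ Wt : Fin n → lp (fun _ : Word n => H) 2 →L[ℂ] lp (fun _ : Word n => H) 2,
          IsWeightedShiftTensor μ Wt ∧
          ∃ (X : H →L[ℂ] lp (fun _ : Word n => H) 2) (c : ℝ), 0 < c ∧
            (∀ h : H, c * ‖h‖ ≤ ‖X h‖) ∧
            (∀ i : Fin n, ∀ y ∈ Set.range X, adjoint (Wt i) y ∈ Set.range X) ∧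
            (∀ i : Fin n, X.comp (adjoint (T i)) = (adjoint (Wt i)).comp X) ∧
            ‖X‖ * c⁻¹ ≤ Real.sqrt (∑ k ∈ Finset.range m, 1 / ((k : ℝ) + 1) ^ 2)) ∧
        ∀ co : Word n →₀ ℂ,
          ‖polyOp T co‖ ≤
            Real.sqrt (∑ k ∈ Finset.range m, 1 / ((k : ℝ) + 1) ^ 2) * ‖polyOp W co‖ := by
  classical
  set S : ℝ := ∑ k ∈ Finset.range m, 1 / ((k : ℝ) + 1) ^ 2 with hSdef
  have hS1 : (1 : ℝ) + 4⁻¹ ≤ S := by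
    have h2 : Finset.range 2 ⊆ Finset.range m := Finset.range_subset_range.mpr hm
    have h3 : ∑ k ∈ Finset.range 2, 1 / ((k : ℝ) + 1) ^ 2 ≤ S :=
      Finset.sum_le_sum_of_subset_of_nonneg h2 (fun k _ _ => by positivity)
    rw [Finset.sum_range_succ, Finset.sum_range_one] at h3
    norm_num at h3 ⊢
    linarith
  have hsq1 : 1 < Real.sqrt S := by
    rw [show (1:ℝ) = Real.sqrt 1 from Real.sqrt_one.symm]
    exact Real.sqrt_lt_sqrt (by norm_num) (by linarith)
  set δ : ℝ := Real.sqrt S - 1 with hδdef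
  have hδ : 0 < δ := by rw [hδdef]; linarith
  set D : ℝ := ∑ β ∈ FF n m, ‖wordOp T β‖ with hDdef
  have hD0 : 0 ≤ D := Finset.sum_nonneg fun _ _ => norm_nonneg _
  set r : ℝ := max 1 ((D + 1) / δ) with hrdef
  have hr1 : 1 ≤ r := le_max_left _ _
  have hr0 : 0 < r := lt_of_lt_of_le one_pos hr1
  have hDr : D / r ≤ δ := by
    rw [div_le_iff₀ hr0]
    have h2 : (D + 1) / δ ≤ r := le_max_right _ _
    rw [div_le_iff₀ hδ] at h2
    nlinarith
  set μ : Word n → ℝ := μd m r with hμdef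
  have hμ0 : ∀ β : Word n, m ≤ FreeMonoid.length β → μ β = 0 :=
    fun β hβ => μd_zero_of_ge (by omega) hβ
  -- key sum bound
  have sumbound : ∑ β ∈ FF n m, aw r (FreeMonoid.length β) * ‖wordOp T β‖ ≤ Real.sqrt S := by
    set g : Word n → ℝ := fun β => aw r (FreeMonoid.length β) * ‖wordOp T β‖ with hg
    have h1mem : (1 : Word n) ∈ FF n m := mem_FF.mpr (by rw [length_one_word]; omega)
    rw [← Finset.add_sum_erase _ g h1mem]
    have hterm1 : g 1 ≤ 1 := by
      rw [hg]
      show aw r (FreeMonoid.length (1 : Word n)) * ‖wordOp T 1‖ ≤ 1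
      rw [length_one_word, aw_zero, one_mul, wordOp_one, ContinuousLinearMap.one_def]
      exact ContinuousLinearMap.norm_id_le
    have hrest : ∑ β ∈ (FF n m).erase 1, g β ≤ δ := by
      have step1 : ∑ β ∈ (FF n m).erase 1, g β
          ≤ ∑ β ∈ (FF n m).erase 1, r⁻¹ * ‖wordOp T β‖ := by
        apply Finset.sum_le_sum
        intro β hβ
        have hβ1 : β ≠ 1 := Finset.ne_of_mem_erase hβ
        have hlen : 1 ≤ FreeMonoid.length β := by
          rcases Nat.eq_zero_or_pos (FreeMonoid.length β) with h0 | h0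
          · exact absurd (length_eq_zero_iff.mp h0) hβ1
          · omega
        exact mul_le_mul_of_nonneg_right (aw_le hr1 hlen) (norm_nonneg _)
      have step2 : ∑ β ∈ (FF n m).erase 1, r⁻¹ * ‖wordOp T β‖
          = r⁻¹ * ∑ β ∈ (FF n m).erase 1, ‖wordOp T β‖ := by rw [Finset.mul_sum]
      have step3 : ∑ β ∈ (FF n m).erase 1, ‖wordOp T β‖ ≤ D :=
        Finset.sum_le_sum_of_subset_of_nonneg (Finset.erase_subset _ _)
          (fun _ _ _ => norm_nonneg _)
      have step4 : r⁻¹ * ∑ β ∈ (FF n m).erase 1, ‖wordOp T β‖ ≤ r⁻¹ * D :=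
        mul_le_mul_of_nonneg_left step3 (by positivity)
      have step5 : r⁻¹ * D = D / r := (div_eq_inv_mul D r).symm
      calc ∑ β ∈ (FF n m).erase 1, g β ≤ r⁻¹ * ∑ β ∈ (FF n m).erase 1, ‖wordOp T β‖ := by
            rw [← step2]; exact step1
        _ ≤ r⁻¹ * D := step4
        _ = D / r := step5
        _ ≤ δ := hDr
    calc g 1 + ∑ β ∈ (FF n m).erase 1, g β ≤ 1 + δ := add_le_add hterm1 hrest
      _ = Real.sqrt S := by rw [hδdef]; ring
  refine ⟨μ, fun β _ => μd_nonneg hr0.le β, ?_, fun β h1 h2 => μd_pos hr0 h1 h2, hμ0, ?_⟩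
  · -- BddWeights
    intro i
    refine ⟨2 * r, ?_⟩
    rintro x ⟨α, rfl⟩
    exact μd_le hr0.le _
  refine ⟨fun i => shift (E := ℂ) μ m i, ?_, ?_, ?_, ?_, ?_⟩
  · -- IsWeightedShift
    intro i α
    exact shift_single (E := ℂ) μ m hμ0 i α 1
  · -- nilpotency
    exact fun f => shift_wordOp_zero μ m hμ0 (by omega) f
  · -- nonvanishing at m - 1
    refine ⟨fun _ => ⟨0, hn⟩, fun h0 => ?_⟩
    set l : List (Fin n) := List.ofFn (fun _ : Fin (m - 1) => (⟨0, hn⟩ : Fin n)) with hldef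
    have hlen : l.length = m - 1 := by rw [hldef, List.length_ofFn]
    have heval := shift_word (E := ℂ) μ m hμ0 l 1 1
    have hwo : wordOp (fun i => shift (E := ℂ) μ m i)
        (wordOfFn (fun _ : Fin (m - 1) => (⟨0, hn⟩ : Fin n)))
        = (l.map (shift (E := ℂ) μ m)).prod := rfl
    rw [hwo] at h0
    rw [h0] at heval
    rw [mul_one (FreeMonoid.ofList l)] at heval
    have hc := congrArg
      (fun z : lpE n ℂ => (z : ∀ _ : Word n, ℂ) (FreeMonoid.ofList l)) heval
    have hself : ((lp.single 2 (FreeMonoid.ofList l) (1:ℂ) : lpE n ℂ) :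
        ∀ _ : Word n, ℂ) (FreeMonoid.ofList l) = 1 :=
      lp.single_apply_self (E := fun _ : Word n => ℂ) 2 _ 1
    simp only [ContinuousLinearMap.zero_apply, lp.coeFn_zero, Pi.zero_apply,
      lp.coeFn_smul, Pi.smul_apply, hself, smul_eq_mul, mul_one] at hc
    have hpos : 0 < prodμ μ l 1 := prodμ_μd_pos hr0 (by omega) l (by omega)
    have hzero : (0 : ℝ) = prodμ μ l 1 := by exact_mod_cast hc
    linarith
  · -- the tensor shift and X
    refine ⟨fun i => shift (E := H) μ m i, fun i α h => shift_single μ m hμ0 i α h, ?_⟩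
    set X : H →L[ℂ] lpE n H := ∑ β ∈ FF n m,
      sCLM β ∘L (((aw r (FreeMonoid.length β) : ℝ) : ℂ) •
        ContinuousLinearMap.adjoint (wordOp T β)) with hXdef
    have X_apply : ∀ h : H, X h = ∑ β ∈ FF n m,
        lp.single 2 β (((aw r (FreeMonoid.length β) : ℝ) : ℂ) •
          ContinuousLinearMap.adjoint (wordOp T β) h) := by
      intro h
      rw [hXdef]
      simp only [ContinuousLinearMap.sum_apply, ContinuousLinearMap.comp_apply,
        ContinuousLinearMap.smul_apply, sCLM_apply]
    have Xcoord : ∀ (h : H) (γ : Word n), (X h : ∀ _ : Word n, H) γ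
        = ((aw r (FreeMonoid.length γ) : ℝ) : ℂ) •
            ContinuousLinearMap.adjoint (wordOp T γ) h := by
      intro h γ
      rw [X_apply, coord_sum_single]
      by_cases hγ : γ ∈ FF n m
      · rw [if_pos hγ]
      · rw [if_neg hγ]
        rw [mem_FF, not_lt] at hγ
        rw [wordOp_zero_of_long T m hnil hγ, map_zero, ContinuousLinearMap.zero_apply,
          smul_zero]
    have hintw : ∀ i : Fin n, X.comp (ContinuousLinearMap.adjoint (T i))
        = (ContinuousLinearMap.adjoint (shift (E := H) μ m i)).comp X := by
      intro i
      rw [← bshift_eq_adjoint μ m i]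
      refine ContinuousLinearMap.ext fun h => ?_
      simp only [ContinuousLinearMap.comp_apply]
      rw [bshift_apply, X_apply]
      have hsub : FF n (m - 1) ⊆ FF n m := by
        intro β hβ
        rw [mem_FF] at hβ ⊢
        omega
      have hvanish : ∀ β ∈ FF n m, β ∉ FF n (m - 1) →
          lp.single 2 β (((aw r (FreeMonoid.length β) : ℝ) : ℂ) •
            ContinuousLinearMap.adjoint (wordOp T β)
              (ContinuousLinearMap.adjoint (T i) h)) = (0 : lpE n H) := by
        intro β hβm hβ1
        rw [mem_FF] at hβm
        rw [mem_FF, not_lt] at hβ1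
        have hzero : wordOp T (FreeMonoid.of i * β) = 0 :=
          wordOp_zero_of_long T m hnil (by rw [length_of_mul]; omega)
        have hz2 : ContinuousLinearMap.adjoint (wordOp T β)
            (ContinuousLinearMap.adjoint (T i) h) = 0 := by
          have h2 : ContinuousLinearMap.adjoint (wordOp T (FreeMonoid.of i * β)) h = 0 := by
            rw [hzero, map_zero, ContinuousLinearMap.zero_apply]
          rw [wordOp_cons, ContinuousLinearMap.adjoint_comp,
            ContinuousLinearMap.comp_apply] at h2
          exact h2
        rw [hz2, smul_zero, lpSingle_zero]
      rw [← Finset.sum_subset hsub hvanish]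
      refine Finset.sum_congr rfl fun α hα => ?_
      rw [mem_FF] at hα
      congr 1
      rw [Xcoord, length_of_mul, smul_smul]
      have hadj : ContinuousLinearMap.adjoint (wordOp T (FreeMonoid.of i * α)) h
          = ContinuousLinearMap.adjoint (wordOp T α)
              (ContinuousLinearMap.adjoint (T i) h) := by
        rw [wordOp_cons, ContinuousLinearMap.adjoint_comp, ContinuousLinearMap.comp_apply]
      rw [← hadj]
      have harith : μ (FreeMonoid.of i * α) * aw r (FreeMonoid.length α + 1)
          = aw r (FreeMonoid.length α) :=
        μd_mul_aw hr0 (by omega) _ (length_of_mul i α)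
      rw [← harith]
      push_cast
      ring_nf
    refine ⟨X, 1, one_pos, ?_, ?_, ?_, ?_⟩
    · -- lower bound
      intro h
      have h1 : (X h : ∀ _ : Word n, H) 1 = h := by
        rw [Xcoord, length_one_word, aw_zero, wordOp_one, ContinuousLinearMap.one_def,
          ContinuousLinearMap.adjoint_id]
        simp
      calc 1 * ‖h‖ = ‖(X h : ∀ _ : Word n, H) 1‖ := by rw [one_mul, h1]
        _ ≤ ‖X h‖ := lp.norm_apply_le_norm (by norm_num) (X h) 1
    · -- invariance of the range
      rintro i y ⟨h, rfl⟩
      refine ⟨ContinuousLinearMap.adjoint (T i) h, ?_⟩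
      have := congrArg (fun A : H →L[ℂ] lpE n H => A h) (hintw i)
      simpa using this
    · exact hintw
    · -- norm bound
      rw [inv_one, mul_one]
      refine ContinuousLinearMap.opNorm_le_bound _ (Real.sqrt_nonneg _) fun h => ?_
      rw [X_apply]
      refine le_trans (norm_sum_le _ _) ?_
      have hstep : ∀ β ∈ FF n m,
          ‖(lp.single 2 β (((aw r (FreeMonoid.length β) : ℝ) : ℂ) •
            ContinuousLinearMap.adjoint (wordOp T β) h) : lpE n H)‖
          ≤ (aw r (FreeMonoid.length β) * ‖wordOp T β‖) * ‖h‖ := by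
        intro β _
        rw [norm_single', norm_smul, Complex.norm_real,
          Real.norm_eq_abs, abs_of_nonneg (aw_nonneg hr0 _)]
        have h1 : ‖ContinuousLinearMap.adjoint (wordOp T β) h‖
            ≤ ‖wordOp T β‖ * ‖h‖ := by
          have h2 := ContinuousLinearMap.le_opNorm
            (ContinuousLinearMap.adjoint (wordOp T β)) h
          rwa [LinearIsometryEquiv.norm_map ContinuousLinearMap.adjoint (wordOp T β)] at h2
        calc aw r (FreeMonoid.length β) * ‖ContinuousLinearMap.adjoint (wordOp T β) h‖
            ≤ aw r (FreeMonoid.length β) * (‖wordOp T β‖ * ‖h‖) :=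
              mul_le_mul_of_nonneg_left h1 (aw_nonneg hr0 _)
          _ = (aw r (FreeMonoid.length β) * ‖wordOp T β‖) * ‖h‖ := by ring
      calc ∑ β ∈ FF n m, ‖(lp.single 2 β (((aw r (FreeMonoid.length β) : ℝ) : ℂ) •
            ContinuousLinearMap.adjoint (wordOp T β) h) : lpE n H)‖
          ≤ ∑ β ∈ FF n m, (aw r (FreeMonoid.length β) * ‖wordOp T β‖) * ‖h‖ :=
            Finset.sum_le_sum hstep
        _ = (∑ β ∈ FF n m, aw r (FreeMonoid.length β) * ‖wordOp T β‖) * ‖h‖ := by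
            rw [Finset.sum_mul]
        _ ≤ Real.sqrt S * ‖h‖ := mul_le_mul_of_nonneg_right sumbound (norm_nonneg _)
  · -- the polynomial inequality
    intro co
    set wW : Fin n → Fock n →L[ℂ] Fock n := fun i => shift (E := ℂ) μ m i with hwWdef
    set P : ℝ := ‖polyOp wW co‖ with hPdef
    have hP0 : 0 ≤ P := norm_nonneg _
    have hws : ∀ β : Word n, wordOp wW β (fockE 1)
        = lp.single 2 β ((prodμ μ (FreeMonoid.toList β) 1 : ℝ) : ℂ) := by
      intro β
      have h1 := shift_word (E := ℂ) μ m hμ0 (FreeMonoid.toList β) 1 1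
      have h2 : FreeMonoid.ofList (FreeMonoid.toList β) * 1 = β := by
        rw [mul_one, FreeMonoid.ofList_toList]
      rw [h2] at h1
      have h3 : wordOp wW β (fockE 1)
          = ((FreeMonoid.toList β).map (shift (E := ℂ) μ m)).prod (lp.single 2 1 1) := rfl
      rw [h3, h1, ← lp.single_smul, smul_eq_mul, mul_one]
    have heval : polyOp wW co (fockE 1) = ∑ β ∈ co.support,
        lp.single 2 β (co β * ((prodμ μ (FreeMonoid.toList β) 1 : ℝ) : ℂ)) := by
      show (Finsupp.sum co fun α z => z • wordOp wW α) (fockE 1) = _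
      rw [Finsupp.sum, ContinuousLinearMap.sum_apply]
      refine Finset.sum_congr rfl fun β _ => ?_
      rw [ContinuousLinearMap.smul_apply, hws β, ← lp.single_smul, smul_eq_mul]
    have key1 : ∀ α ∈ co.support, FreeMonoid.length α < m →
        ‖co α‖ * (aw r (FreeMonoid.length α))⁻¹ ≤ P := by
      intro α hα hlt
      have hcoord : ((polyOp wW co (fockE 1) : Fock n) : ∀ _ : Word n, ℂ) α
          = co α * ((prodμ μ (FreeMonoid.toList α) 1 : ℝ) : ℂ) := by
        rw [heval, coord_sum_single, if_pos hα]
      have hlen' : (FreeMonoid.toList α).length ≤ m - 1 := by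
        rw [← length_eq_toList]; omega
      have hval : prodμ μ (FreeMonoid.toList α) 1 = (aw r (FreeMonoid.length α))⁻¹ := by
        rw [prodμ_μd_eq_aw_inv hr0 (by omega) _ hlen', ← length_eq_toList]
      have hnn : 0 ≤ prodμ μ (FreeMonoid.toList α) 1 :=
        (prodμ_μd_pos hr0 (by omega) _ hlen').le
      calc ‖co α‖ * (aw r (FreeMonoid.length α))⁻¹
          = ‖co α * ((prodμ μ (FreeMonoid.toList α) 1 : ℝ) : ℂ)‖ := by
            rw [norm_mul, Complex.norm_real, Real.norm_eq_abs, abs_of_nonneg hnn, hval]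
        _ = ‖((polyOp wW co (fockE 1) : Fock n) : ∀ _ : Word n, ℂ) α‖ := by rw [hcoord]
        _ ≤ ‖polyOp wW co (fockE 1)‖ := lp.norm_apply_le_norm (by norm_num) _ α
        _ ≤ P * ‖(fockE 1 : Fock n)‖ := ContinuousLinearMap.le_opNorm _ _
        _ = P := by
            have : ‖(fockE 1 : Fock n)‖ = 1 := by
              rw [fockE, norm_single' (E := ℂ)]
              simp
            rw [this, mul_one]
    calc ‖polyOp T co‖ ≤ ∑ α ∈ co.support, ‖co α‖ * ‖wordOp T α‖ := by
          rw [polyOp, Finsupp.sum]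
          refine le_trans (norm_sum_le _ _) (le_of_eq ?_)
          exact Finset.sum_congr rfl fun α _ => norm_smul _ _
      _ = ∑ α ∈ co.support.filter (fun α => FreeMonoid.length α < m),
            ‖co α‖ * ‖wordOp T α‖ := by
          symm
          apply Finset.sum_filter_of_ne
          intro α hα hne
          by_contra hge
          exact hne (by rw [wordOp_zero_of_long T m hnil (le_of_not_gt hge),
            norm_zero, mul_zero])
      _ ≤ ∑ α ∈ co.support.filter (fun α => FreeMonoid.length α < m),
            P * (aw r (FreeMonoid.length α) * ‖wordOp T α‖) := by
          refine Finset.sum_le_sum fun α hα => ?_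
          rw [Finset.mem_filter] at hα
          have hk := key1 α hα.1 hα.2
          have haw := aw_pos hr0 (FreeMonoid.length α)
          have h' := mul_le_mul_of_nonneg_right hk (aw_nonneg hr0 (FreeMonoid.length α))
          rw [mul_assoc, inv_mul_cancel₀ haw.ne', mul_one] at h'
          calc ‖co α‖ * ‖wordOp T α‖ ≤ (P * aw r (FreeMonoid.length α)) * ‖wordOp T α‖ :=
                mul_le_mul_of_nonneg_right h' (norm_nonneg _)
            _ = P * (aw r (FreeMonoid.length α) * ‖wordOp T α‖) := by ring
      _ = P * ∑ α ∈ co.support.filter (fun α => FreeMonoid.length α < m),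
            aw r (FreeMonoid.length α) * ‖wordOp T α‖ := by rw [Finset.mul_sum]
      _ ≤ P * ∑ β ∈ FF n m, aw r (FreeMonoid.length β) * ‖wordOp T β‖ := by
          refine mul_le_mul_of_nonneg_left ?_ hP0
          refine Finset.sum_le_sum_of_subset_of_nonneg ?_ ?_
          · intro α hα
            rw [Finset.mem_filter] at hα
            exact mem_FF.mpr hα.2
          · intro β _ _
            exact mul_nonneg (aw_nonneg hr0 _) (norm_nonneg _)
      _ ≤ P * Real.sqrt S := mul_le_mul_of_nonneg_left sumbound hP0
      _ = Real.sqrt S * P := mul_comm _ _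

end
end
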